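/- arXiv:1310.0950 — 8 statements merged into one kernel-verified Lean document; each statement's English description precedes it below -/
import Mathlib

section
/- Let T be a C_{·0} contraction on a Hilbert space H, i.e., ‖T‖ ≤ 1 and T*^m h → 0 for every h ∈ H. Then the map L_T : H → ℓ²(ℕ, D_{T*}) defined by (L_T h)(m) = D_{T*} T*^m h is a well-defined isometry. -/
open scoped ComplexInnerProductSpace ENNReal NNReal

lemma defect_norm_sq {H : Type*} [NormedAddCommGroup H] [InnerProductSpace ℂ H] [CompleteSpace H]
    (T D : H →L[ℂ] H) (hDpos : D.IsPositive) (hDsq : D ^ 2 = 1 - T * star T) (x : H) :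
    ‖D x‖ ^ 2 = ‖x‖ ^ 2 - ‖(star T) x‖ ^ 2 := by
  have hsa : ContinuousLinearMap.adjoint D = D :=
    ContinuousLinearMap.isSelfAdjoint_iff'.mp hDpos.isSelfAdjoint
  have hT2 : ContinuousLinearMap.adjoint (star T) = T := by
    rw [← ContinuousLinearMap.star_eq_adjoint, star_star]
  have h1 : (⟪D x, D x⟫ : ℂ) = ⟪(D ^ 2) x, x⟫ := by
    rw [pow_two, ContinuousLinearMap.mul_apply]
    calc (⟪D x, D x⟫ : ℂ) = ⟪ContinuousLinearMap.adjoint D (D x), x⟫ :=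
          (ContinuousLinearMap.adjoint_inner_left D x (D x)).symm
      _ = ⟪D (D x), x⟫ := by rw [hsa]
  have h2 : ((1 - T * star T : H →L[ℂ] H)) x = x - T ((star T) x) := by
    simp [ContinuousLinearMap.sub_apply, ContinuousLinearMap.mul_apply]
  have h3 : (⟪T ((star T) x), x⟫ : ℂ) = ⟪(star T) x, (star T) x⟫ :=
    calc (⟪T ((star T) x), x⟫ : ℂ)
        = ⟪ContinuousLinearMap.adjoint (star T) ((star T) x), x⟫ := by rw [hT2]
      _ = ⟪(star T) x, star T x⟫ := ContinuousLinearMap.adjoint_inner_left (star T) x ((star T) x)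
  have := h1
  rw [hDsq, h2, inner_sub_left, h3] at this
  rw [inner_self_eq_norm_sq_to_K, inner_self_eq_norm_sq_to_K, inner_self_eq_norm_sq_to_K] at this
  exact_mod_cast this

/-- Let `T` be a `C.₀` contraction on a complex Hilbert space `H` (`T*^m → 0` strongly) and
`D = D_{T*}` its defect operator.  Then `h ↦ (D T*^m h)ₘ` defines an isometry of `H` into
`ℓ²(ℕ, H)` (with values in the defect space `D_{T*}`). -/
theorem stmt_5 {H : Type*} [NormedAddCommGroup H] [InnerProductSpace ℂ H] [CompleteSpace H]
    (T D : H →L[ℂ] H) (hT : ‖T‖ ≤ 1)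
    (hpure : ∀ h : H, Filter.Tendsto (fun m : ℕ => ((star T) ^ m) h) Filter.atTop (nhds 0))
    (hDpos : D.IsPositive) (hDsq : D ^ 2 = 1 - T * star T) :
    ∃ L : H →ₗᵢ[ℂ] lp (fun _ : ℕ => H) 2,
      ∀ (h : H) (m : ℕ), (L h) m = D (((star T) ^ m) h) := by
  classical
  have key : ∀ h : H, HasSum (fun m : ℕ => ‖D (((star T) ^ m) h)‖ ^ 2) (‖h‖ ^ 2) := by
    intro h
    set a : ℕ → ℝ := fun m => ‖((star T) ^ m) h‖ ^ 2 with ha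
    have hterm : ∀ m, ‖D (((star T) ^ m) h)‖ ^ 2 = a m - a (m + 1) := by
      intro m
      rw [defect_norm_sq T D hDpos hDsq (((star T) ^ m) h)]
      simp only [ha]
      congr 2
      rw [pow_succ', ContinuousLinearMap.mul_apply]
    have hnn : ∀ m, (0:ℝ) ≤ ‖D (((star T) ^ m) h)‖ ^ 2 := fun m => sq_nonneg _
    rw [hasSum_iff_tendsto_nat_of_nonneg hnn]
    have hsum : ∀ n, ∑ i ∈ Finset.range n, ‖D (((star T) ^ i) h)‖ ^ 2 = a 0 - a n := by
      intro n
      simp only [hterm]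
      exact Finset.sum_range_sub' a n
    have hlim : Filter.Tendsto a Filter.atTop (nhds 0) := by
      have h1 : Filter.Tendsto (fun m : ℕ => ‖((star T) ^ m) h‖) Filter.atTop (nhds 0) := by
        simpa using (hpure h).norm
      simpa [ha] using h1.pow 2
    have ha0 : a 0 = ‖h‖ ^ 2 := by simp [ha]
    simp only [hsum]
    simpa [ha0] using Filter.Tendsto.sub (tendsto_const_nhds (x := a 0)) hlim
  have mem : ∀ h : H, Memℓp (fun m : ℕ => D (((star T) ^ m) h)) 2 := by
    intro h
    apply memℓp_gen
    have h2 : ((2 : ℝ≥0∞).toReal) = (2 : ℝ) := by norm_num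
    have := (key h).summable
    refine Summable.congr this fun m => ?_
    rw [h2, show ((2:ℝ)) = ((2:ℕ):ℝ) by norm_num, Real.rpow_natCast]
  have coeval : ∀ (h : H) (m : ℕ),
      ((⟨fun m : ℕ => D (((star T) ^ m) h), mem h⟩ : lp (fun _ : ℕ => H) 2) : ∀ _ : ℕ, H) m
        = D (((star T) ^ m) h) := fun _ _ => rfl
  refine ⟨{ toFun := fun h => ⟨fun m : ℕ => D (((star T) ^ m) h), mem h⟩
            map_add' := ?_
            map_smul' := ?_
            norm_map' := ?_ }, fun h m => rfl⟩
  · intro x y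
    apply lp.ext
    rw [lp.coeFn_add]
    funext m
    simp [map_add]
  · intro c x
    apply lp.ext
    rw [lp.coeFn_smul]
    funext m
    simp [map_smul]
  · intro h
    set f : lp (fun _ : ℕ => H) 2 := ⟨fun m : ℕ => D (((star T) ^ m) h), mem h⟩ with hf
    have hp : (0:ℝ) < (2 : ℝ≥0∞).toReal := by norm_num
    have h1 : ‖f‖ ^ ((2 : ℝ≥0∞).toReal) = ∑' m, ‖f m‖ ^ ((2 : ℝ≥0∞).toReal) :=
      lp.norm_rpow_eq_tsum hp f
    have h2 : ((2 : ℝ≥0∞).toReal) = ((2:ℕ):ℝ) := by norm_num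
    have h3 : ∑' m, ‖f m‖ ^ ((2 : ℝ≥0∞).toReal) = ‖h‖ ^ 2 := by
      rw [← (key h).tsum_eq]
      refine tsum_congr fun m => ?_
      rw [h2, Real.rpow_natCast]
    simp only [h2, Real.rpow_natCast] at h1 h3
    rw [h3] at h1
    show ‖f‖ = ‖h‖
    nlinarith [norm_nonneg f, norm_nonneg h]
end

section
/- Let T be a contraction on H and λ, w ∈ 𝔻. With θ_T(z) = -T + D_{T*}(I - zT*)^{-1} z D_T (the characteristic function) one has (1 - λ w̄)^{-1} (I - θ_T(λ) θ_T(w)*) = D_{T*} (I - λT*)^{-1} (I - w̄ T)^{-1} D_{T*} as operators on D_{T*}. -/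
open StarAlgebra in
lemma commute_of_mem_elemental {A : Type*} [CStarAlgebra A] {a x y : A}
    (h1 : Commute x a) (h2 : Commute x (star a)) (hy : y ∈ elemental ℂ a) :
    Commute x y := by
  induction hy using StarAlgebra.elemental.induction_on with
  | self => exact h1
  | star_self => exact h2
  | algebraMap r => exact (Algebra.commutes r x).symm
  | add u hu v hv hpu hpv => exact hpu.add_right hpv
  | mul u hu v hv hpu hpv => exact hpu.mul_right hpv
  | closure s hs hps v hv =>
      have hc : IsClosed {z : A | Commute x z} := by
        have : {z : A | Commute x z} = {z : A | x * z = z * x} := rfl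
        rw [this]
        exact isClosed_eq (by fun_prop) (by fun_prop)
      exact closure_minimal (fun u hu => hps u hu) hc hv

lemma commute_cfc_complex {A : Type*} [CStarAlgebra A] {a x : A}
    (h1 : Commute x a) (h2 : Commute x (star a)) (g : ℂ → ℂ) :
    Commute x (cfc g a) := by
  by_cases ha : IsStarNormal a
  · by_cases hg : ContinuousOn g (spectrum ℂ a)
    · rw [cfc_apply g a ha hg]
      refine commute_of_mem_elemental h1 h2 ?_
      rw [cfcHom_eq_of_isStarNormal]
      exact Subtype.coe_prop _
    · rw [cfc_apply_of_not_continuousOn a hg]; exact Commute.zero_right x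
  · rw [cfc_apply_of_not_predicate a ha]; exact Commute.zero_right x

lemma commute_cfc_sqrt {A : Type*} [CStarAlgebra A] [PartialOrder A] [StarOrderedRing A] {a x : A}
    (ha : 0 ≤ a) (h1 : Commute x a) : Commute x (CFC.sqrt a) := by
  have hsa : IsSelfAdjoint a := .of_nonneg ha
  rw [CFC.sqrt_eq_cfc, cfc_nnreal_eq_real (A := A) NNReal.sqrt a ha, cfc_real_eq_complex _ hsa]
  exact commute_cfc_complex h1 (by rwa [hsa.star_eq]) _

set_option maxHeartbeats 1000000 in
set_option synthInstance.maxHeartbeats 1000000 in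
open ContinuousLinearMap in
lemma intertwine {H : Type*} [NormedAddCommGroup H] [InnerProductSpace ℂ H] [CompleteSpace H]
    (T D D' : H →L[ℂ] H) (hDpos : D.IsPositive) (hD'pos : D'.IsPositive)
    (h : T * (D * D) = (D' * D') * T) : T * D = D' * T := by
  classical
  let E := WithLp 2 (H × H)
  let e : E ≃L[ℂ] H × H := WithLp.prodContinuousLinearEquiv 2 ℂ H H
  let P : E →L[ℂ] E := (e.symm : (H × H) →L[ℂ] E).comp ((D.prodMap D').comp (e : E →L[ℂ] H × H))
  let X : E →L[ℂ] E := (e.symm : (H × H) →L[ℂ] E).comp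
    (((ContinuousLinearMap.inr ℂ H H).comp (T.comp (ContinuousLinearMap.fst ℂ H H))).comp
      (e : E →L[ℂ] H × H))
  have hPapp : ∀ v : E, P v = (WithLp.equiv 2 (H × H)).symm (D v.fst, D' v.snd) := by
    intro v; rfl
  have hXapp : ∀ v : E, X v = (WithLp.equiv 2 (H × H)).symm (0, T v.fst) := by
    intro v; rfl
  have hDsym := (isSelfAdjoint_iff_isSymmetric.mp hDpos.isSelfAdjoint)
  have hD'sym := (isSelfAdjoint_iff_isSymmetric.mp hD'pos.isSelfAdjoint)
  have hP : P.IsPositive := by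
    constructor
    · show (P : E →ₗ[ℂ] E).IsSymmetric
      intro v w
      show (inner ℂ (P v) w : ℂ) = inner ℂ v (P w)
      rw [hPapp, hPapp, WithLp.prod_inner_apply, WithLp.prod_inner_apply]
      simp only [WithLp.equiv_symm_apply, WithLp.toLp_fst, WithLp.equiv_symm_apply, WithLp.toLp_snd]
      exact congrArg₂ (· + ·) (hDsym v.fst w.fst) (hD'sym v.snd w.snd)
    · intro v
      have : P.reApplyInnerSelf v = Complex.re (inner ℂ (P v) v) := rfl
      rw [this, hPapp, WithLp.prod_inner_apply]
      simp only [WithLp.equiv_symm_apply, WithLp.toLp_fst, WithLp.equiv_symm_apply, WithLp.toLp_snd, map_add]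
      exact add_nonneg (hDpos.re_inner_nonneg_left v.fst) (hD'pos.re_inner_nonneg_left v.snd)
  have hPnonneg : (0 : E →L[ℂ] E) ≤ P := (ContinuousLinearMap.nonneg_iff_isPositive P).mpr hP
  have hcomm : Commute X (P * P) := by
    show X * (P * P) = (P * P) * X
    ext v
    have h1 : (X * (P * P)) v = (WithLp.equiv 2 (H × H)).symm (0, T (D (D v.fst))) := by
      simp only [ContinuousLinearMap.mul_apply, hPapp, hXapp]
      simp [WithLp.equiv_symm_apply, WithLp.toLp_fst, WithLp.equiv_symm_apply, WithLp.toLp_snd]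
    have h2 : ((P * P) * X) v = (WithLp.equiv 2 (H × H)).symm (0, D' (D' (T v.fst))) := by
      simp only [ContinuousLinearMap.mul_apply, hPapp, hXapp]
      simp [WithLp.equiv_symm_apply, WithLp.toLp_fst, WithLp.equiv_symm_apply, WithLp.toLp_snd]
    rw [h1, h2]
    have := congrFun (congrArg DFunLike.coe h) v.fst
    simp only [ContinuousLinearMap.mul_apply] at this
    rw [this]
  have hsq : CFC.sqrt (P * P) = P := CFC.sqrt_mul_self P hPnonneg
  have hXP : Commute X P := by
    rw [← hsq]
    have : (0 : E →L[ℂ] E) ≤ P * P := by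
      have := star_mul_self_nonneg P
      rwa [hP.isSelfAdjoint.star_eq] at this
    exact commute_cfc_sqrt this hcomm
  ext x
  have := congrFun (congrArg DFunLike.coe hXP.eq) ((WithLp.equiv 2 (H × H)).symm (x, 0))
  simp only [ContinuousLinearMap.mul_apply, hPapp, hXapp, WithLp.equiv_symm_apply, WithLp.toLp_fst,
    WithLp.equiv_symm_apply, WithLp.toLp_snd] at this
  have h2 := congrArg (fun z : E => z.snd) this
  simp only [WithLp.equiv_symm_apply, WithLp.toLp_snd] at h2
  simpa using h2
set_option maxHeartbeats 1000000 in
/-- For a contraction `T` and `λ, w ∈ 𝔻`, with `θ_T(z) = -T + D_{T*}(I - zT*)⁻¹ z D_T` the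
characteristic function, one has on the defect space `D_{T*}`:
`(1 - λ w̄)⁻¹ (I - θ_T(λ) θ_T(w)*) = D_{T*} (I - λT*)⁻¹ (I - w̄T)⁻¹ D_{T*}`. -/
theorem stmt_7 {H : Type*} [NormedAddCommGroup H] [InnerProductSpace ℂ H] [CompleteSpace H]
    (T D D' : H →L[ℂ] H) (hT : ‖T‖ ≤ 1)
    (hDpos : D.IsPositive) (hDsq : D ^ 2 = 1 - star T * T)
    (hD'pos : D'.IsPositive) (hD'sq : D' ^ 2 = 1 - T * star T)
    (Θ : ℂ → (H →L[ℂ] H))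
    (hΘ : ∀ z : ℂ, Θ z = -T + z • (D' * Ring.inverse (1 - z • star T) * D))
    (lam w : ℂ) (hlam : ‖lam‖ < 1) (hw : ‖w‖ < 1)
    (η : H) (hη : η ∈ closure (Set.range D')) :
    (1 - lam * (starRingEnd ℂ) w)⁻¹ • (η - Θ lam (star (Θ w) η)) =
      D' ((Ring.inverse (1 - lam • star T))
        ((Ring.inverse (1 - ((starRingEnd ℂ) w) • T)) (D' η))) := by
  have hDD : D * D = 1 - star T * T := by rw [← pow_two]; exact hDsq
  have hD'D' : D' * D' = 1 - T * star T := by rw [← pow_two]; exact hD'sq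
  have hTD : T * D = D' * T := by
    apply intertwine T D D' hDpos hD'pos
    rw [hDD, hD'D']; noncomm_ring
  have hDsT : D * star T = star T * D' := by
    have := congrArg star hTD
    simpa [star_mul, hDpos.isSelfAdjoint.star_eq, hD'pos.isSelfAdjoint.star_eq] using this
  have hsTnorm : ‖star T‖ ≤ 1 := by rwa [norm_star]
  have hult : ‖lam • star T‖ < 1 := by
    rw [norm_smul]
    exact (mul_le_of_le_one_right (norm_nonneg _) hsTnorm).trans_lt hlam
  have hvlt : ‖(starRingEnd ℂ) w • T‖ < 1 := by
    rw [norm_smul]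
    calc ‖(starRingEnd ℂ) w‖ * ‖T‖ ≤ ‖(starRingEnd ℂ) w‖ :=
          mul_le_of_le_one_right (norm_nonneg _) hT
      _ < 1 := by rwa [RCLike.norm_conj]
  have huu : IsUnit (1 - lam • star T) := ⟨Units.oneSub _ hult, rfl⟩
  have hvv : IsUnit (1 - (starRingEnd ℂ) w • T) := ⟨Units.oneSub _ hvlt, rfl⟩
  set R := Ring.inverse (1 - lam • star T) with hRdef
  set S := Ring.inverse (1 - (starRingEnd ℂ) w • T) with hSdef
  have huR : (1 - lam • star T) * R = 1 := Ring.mul_inverse_cancel _ huu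
  have hRu : R * (1 - lam • star T) = 1 := Ring.inverse_mul_cancel _ huu
  have hvS : (1 - (starRingEnd ℂ) w • T) * S = 1 := Ring.mul_inverse_cancel _ hvv
  have hSv : S * (1 - (starRingEnd ℂ) w • T) = 1 := Ring.inverse_mul_cancel _ hvv
  have hstarW : star (Θ w) = -star T + (starRingEnd ℂ) w • (D * S * D') := by
    have h1 : star ((1 : H →L[ℂ] H) - w • star T) = 1 - (starRingEnd ℂ) w • T := by
      rw [star_sub, star_one, star_smul, star_star, starRingEnd_apply]
    rw [hΘ w, star_add, star_neg, star_smul, star_mul, star_mul,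
      hDpos.isSelfAdjoint.star_eq, hD'pos.isSelfAdjoint.star_eq, ← Ring.inverse_star, h1,
      ← hSdef, starRingEnd_apply, mul_assoc]
  set c := lam * (starRingEnd ℂ) w with hcdef
  set M : H →L[ℂ] H := 1 + (starRingEnd ℂ) w • (T * S) + lam • (R * star T)
      - c • (R * ((1 - star T * T) * S)) with hMdef
  have huRx : ∀ x : H →L[ℂ] H, (1 - lam • star T) * (R * x) = x := fun x => by
    rw [← mul_assoc, huR, one_mul]
  have e1 : M * (1 - (starRingEnd ℂ) w • T) = (1 - (starRingEnd ℂ) w • T)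
      + (starRingEnd ℂ) w • T + lam • (R * (star T * (1 - (starRingEnd ℂ) w • T)))
      - c • (R * (1 - star T * T)) := by
    rw [hMdef]
    simp only [add_mul, sub_mul, one_mul, smul_mul_assoc, mul_assoc, hSv, mul_one]
  have key1 : (1 - lam • star T) * M * (1 - (starRingEnd ℂ) w • T) = (1 - c) • 1 := by
    rw [mul_assoc, e1]
    simp only [mul_add, mul_sub, mul_smul_comm, huRx]
    rw [hcdef]
    simp only [mul_sub, sub_mul, mul_one, one_mul, smul_sub, smul_smul, mul_smul_comm,
      smul_mul_assoc, smul_add, mul_add, add_mul]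
    module
  have key2 : M = (1 - c) • (R * S) := by
    have h1 : R * ((1 - lam • star T) * M * (1 - (starRingEnd ℂ) w • T)) * S = M := by
      calc R * ((1 - lam • star T) * M * (1 - (starRingEnd ℂ) w • T)) * S
          = (R * (1 - lam • star T)) * M * ((1 - (starRingEnd ℂ) w • T) * S) := by
            noncomm_ring
        _ = M := by rw [hRu, hvS, one_mul, mul_one]
    rw [← h1, key1]
    simp [smul_mul_assoc, mul_smul_comm]
  have hTDx : ∀ x : H →L[ℂ] H, T * (D * x) = D' * (T * x) := fun x => by
    rw [← mul_assoc, ← mul_assoc, hTD]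
  have hDDx : ∀ x : H →L[ℂ] H, D * (D * x) = (1 - star T * T) * x := fun x => by
    rw [← mul_assoc, hDD]
  have key3 : (1 : H →L[ℂ] H) - Θ lam * star (Θ w) = (1 - c) • (D' * (R * S) * D') := by
    have key3a : (1 : H →L[ℂ] H) - Θ lam * star (Θ w) = D' * M * D' := by
      rw [hΘ lam, hstarW, hMdef, hcdef]
      simp only [neg_mul, mul_neg, neg_neg, neg_add, mul_add, add_mul, mul_sub, sub_mul,
        smul_mul_assoc, mul_smul_comm, smul_smul, mul_assoc, mul_one, one_mul,
        hTDx, hDDx, hDsT, hD'D']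
      module
    rw [key3a, key2]
    simp [smul_mul_assoc, mul_smul_comm]
  have hc1 : (1 : ℂ) - c ≠ 0 := by
    have hcn : ‖c‖ < 1 := by
      rw [hcdef, norm_mul, RCLike.norm_conj]
      calc ‖lam‖ * ‖w‖ ≤ 1 * ‖w‖ := mul_le_mul_of_nonneg_right hlam.le (norm_nonneg _)
        _ = ‖w‖ := one_mul _
        _ < 1 := hw
    intro h0
    rw [sub_eq_zero] at h0
    rw [← h0] at hcn
    simp at hcn
  have happ := congrFun (congrArg DFunLike.coe key3) η
  simp only [ContinuousLinearMap.sub_apply, ContinuousLinearMap.one_apply,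
    ContinuousLinearMap.mul_apply, ContinuousLinearMap.smul_apply] at happ
  rw [happ, inv_smul_smul₀ hc1]
end

section
/- Let T = (T₁, …, Tₙ) be a doubly commuting pure tuple on H, i.e., the Tᵢ are commuting contractions with Tᵢ Tⱼ* = Tⱼ* Tᵢ for i ≠ j and Tᵢ*^m → 0 strongly for each i. Then for every h ∈ H, ‖h‖² = ∑_{k ∈ ℕⁿ} ‖D_{T*} T*^k h‖², where D_{T*} = ∏_{i=1}^n (I - TᵢTᵢ*)^{1/2} and T*^k = T₁*^{k₁} ⋯ Tₙ*^{kₙ}. -/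
set_option synthInstance.maxHeartbeats 1000000
set_option maxHeartbeats 1000000

open Filter

section aux
variable {H : Type*} [NormedAddCommGroup H] [InnerProductSpace ℂ H] [CompleteSpace H]

/-- Anything commuting with a selfadjoint operator commutes with any continuous function of it. -/
lemma my_commute_cfc {a x : H →L[ℂ] H} (hx : Commute x a)
    (f : ℝ → ℝ) : Commute x (cfc f a) := by
  refine cfc_cases (fun y => Commute x y) a f (Commute.zero_right x) fun hf ha' => ?_
  have key : ∀ g : C(spectrum ℝ a, ℝ), Commute x (cfcHom ha' g) := by
    intro g
    induction g using ContinuousMap.induction_on_of_compact with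
    | const r =>
      have : (ContinuousMap.const (spectrum ℝ a) r) = algebraMap ℝ C(spectrum ℝ a, ℝ) r := rfl
      rw [this, AlgHomClass.commutes]
      exact (Algebra.commutes r x).symm
    | id => rw [cfcHom_id ha']; exact hx
    | star_id =>
      have : star (ContinuousMap.restrict (spectrum ℝ a) (ContinuousMap.id ℝ))
          = (ContinuousMap.restrict (spectrum ℝ a) (ContinuousMap.id ℝ)) := by
        ext z; simp
      rw [this, cfcHom_id ha']; exact hx
    | add f g hf hg => rw [map_add]; exact hf.add_right hg
    | mul f g hf hg => rw [map_mul]; exact hf.mul_right hg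
    | frequently f hf =>
      have hclosed : IsClosed {g : C(spectrum ℝ a, ℝ) | Commute x (cfcHom ha' g)} := by
        have hc : Continuous (cfcHom ha' (R := ℝ)) := (cfcHom_isClosedEmbedding ha').continuous
        exact isClosed_eq (by continuity) (by continuity)
      exact hclosed.mem_of_frequently_of_tendsto hf tendsto_id
  exact key _

/-- Anything commuting with the square of a positive operator commutes with the operator. -/
lemma my_commute_of_sq {x d : H →L[ℂ] H} (hd : d.IsPositive)
    (hx : Commute x (d * d)) : Commute x d := by
  have hd0 : (0 : H →L[ℂ] H) ≤ d := (ContinuousLinearMap.nonneg_iff_isPositive d).mpr hd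
  have hdd : (0 : H →L[ℂ] H) ≤ d * d := by
    simpa [hd.isSelfAdjoint.star_eq] using star_mul_self_nonneg d
  set E := cfc (fun r : ℝ => Real.sqrt r) (d * d) with hE
  have hspec : ∀ r ∈ spectrum ℝ (d * d), (0 : ℝ) ≤ r := spectrum_nonneg_of_nonneg hdd
  have hE0 : (0 : H →L[ℂ] H) ≤ E := cfc_nonneg fun r _ => Real.sqrt_nonneg r
  have hEE : E * E = d * d := by
    rw [hE, ← cfc_mul _ _ (d * d)]
    calc cfc (fun r : ℝ => Real.sqrt r * Real.sqrt r) (d * d)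
        = cfc (fun r : ℝ => r) (d * d) :=
          cfc_congr fun r hr => Real.mul_self_sqrt (hspec r hr)
      _ = d * d := cfc_id' ℝ (d * d)
  have h1 : CFC.sqrt (d * d) = E := CFC.sqrt_unique hEE hE0
  have h2 : CFC.sqrt (d * d) = d := CFC.sqrt_mul_self d hd0
  have hEd : E = d := h1 ▸ h2
  exact hEd ▸ my_commute_cfc hx _

lemma my_pow_bound (S : H →L[ℂ] H) (hS : ‖S‖ ≤ 1) : ∀ (m : ℕ) (x : H), ‖(S ^ m) x‖ ≤ ‖x‖ := by
  intro m
  induction m with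
  | zero => intro x; simp
  | succ m ih =>
    intro x
    rw [pow_succ, ContinuousLinearMap.mul_apply]
    calc ‖(S ^ m) (S x)‖ ≤ ‖S x‖ := ih (S x)
      _ ≤ ‖S‖ * ‖x‖ := S.le_opNorm x
      _ ≤ 1 * ‖x‖ := by gcongr
      _ = ‖x‖ := one_mul _

lemma my_tendsto_prod :
    ∀ {n : ℕ} (L : Fin n → ℕ → (H →L[ℂ] H)),
    (∀ i m (x : H), ‖L i m x‖ ≤ 2 * ‖x‖) →
    (∀ i (x : H), Tendsto (fun m => L i m x) atTop (nhds x)) →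
    ∀ x : H, Tendsto (fun m => (List.ofFn fun i => L i m).prod x) atTop (nhds x) := by
  intro n
  induction n with
  | zero => intro L _ _ x; simpa using tendsto_const_nhds
  | succ n ih =>
    intro L hb hlim x
    have hg := ih (fun i => L i.succ) (fun i => hb i.succ) (fun i => hlim i.succ) x
    set g : ℕ → H := fun m => (List.ofFn fun i => L i.succ m).prod x with hgdef
    have key : ∀ m, (List.ofFn fun i => L i m).prod x = L 0 m (g m - x) + L 0 m x := by
      intro m
      rw [List.ofFn_succ, List.prod_cons, ContinuousLinearMap.mul_apply, ← map_add]
      congr 1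
      abel
    simp only [key]
    have h1 : Tendsto (fun m => L 0 m (g m - x)) atTop (nhds 0) := by
      apply squeeze_zero_norm (fun m => hb 0 m (g m - x))
      have hgx : Tendsto (fun m => g m - x) atTop (nhds 0) := by
        simpa using hg.sub (tendsto_const_nhds (x := x))
      have hn : Tendsto (fun m => ‖g m - x‖) atTop (nhds 0) := by
        simpa using hgx.norm
      simpa using hn.const_mul 2
    have h2 : Tendsto (fun m => L 0 m x) atTop (nhds x) := hlim 0 x
    simpa using h1.add h2

end aux

/-- Conjugation rearrangement for doubly commuting families. -/
lemma my_star_prod_mul {M : Type*} [Monoid M] [StarMul M] :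
    ∀ {n : ℕ} (u p : Fin n → M),
    (∀ i j, i ≠ j → Commute (u i) (u j)) →
    (∀ i j, i ≠ j → Commute (u i) (star (u j))) →
    (∀ i j, i ≠ j → Commute (p i) (u j)) →
    (∀ i j, i ≠ j → Commute (p i) (star (u j))) →
    star (List.ofFn u).prod * (List.ofFn p).prod * (List.ofFn u).prod
      = (List.ofFn fun i => star (u i) * p i * u i).prod := by
  intro n
  induction n with
  | zero => intro u p _ _ _ _; simp
  | succ n ih =>
    intro u p huu hus hpu hps
    have key := ih (fun i => u i.succ) (fun i => p i.succ)
      (fun i j hij => huu _ _ (by simpa using hij))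
      (fun i j hij => hus _ _ (by simpa using hij))
      (fun i j hij => hpu _ _ (by simpa using hij))
      (fun i j hij => hps _ _ (by simpa using hij))
    set U : M := (List.ofFn fun i => u i.succ).prod with hU
    set P : M := (List.ofFn fun i => p i.succ).prod with hP
    have h1 : Commute (P) (u 0) := by
      refine Commute.list_prod_left _ _ ?_
      intro x hx
      simp only [List.mem_ofFn] at hx
      obtain ⟨j, rfl⟩ := hx
      exact hpu _ _ (Fin.succ_ne_zero j)
    have h2 : Commute (star U) (star (u 0) * p 0 * u 0) := by
      have hU1 : Commute (star U) (star (u 0)) := by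
        refine ((Commute.list_prod_left _ _ ?_).star_star)
        intro x hx
        simp only [List.mem_ofFn] at hx
        obtain ⟨j, rfl⟩ := hx
        exact (huu _ _ (Fin.succ_ne_zero j))
      have hU2 : Commute (star U) (u 0) := by
        have : Commute U (star (u 0)) := by
          refine Commute.list_prod_left _ _ ?_
          intro x hx
          simp only [List.mem_ofFn] at hx
          obtain ⟨j, rfl⟩ := hx
          exact hus _ _ (Fin.succ_ne_zero j)
        simpa using this.star_star
      have hU3 : Commute (star U) (p 0) := by
        have : Commute U (star (p 0)) := by
          refine Commute.list_prod_left _ _ ?_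
          intro x hx
          simp only [List.mem_ofFn] at hx
          obtain ⟨j, rfl⟩ := hx
          have h' := (hps 0 j.succ (Fin.succ_ne_zero j).symm).star_star
          simpa using h'.symm
        simpa using this.star_star
      exact (hU1.mul_right hU3).mul_right hU2
    rw [List.ofFn_succ, List.ofFn_succ (f := p), List.ofFn_succ (f := fun i => star (u i) * p i * u i),
      List.prod_cons, List.prod_cons, List.prod_cons, ← hU, ← hP, ← key]
    rw [star_mul]
    calc star U * star (u 0) * (p 0 * P) * (u 0 * U)
        = star U * (star (u 0) * p 0 * (P * u 0) * U) := by
          simp only [mul_assoc]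
      _ = star U * (star (u 0) * p 0 * (u 0 * P) * U) := by rw [h1.eq]
      _ = star U * (star (u 0) * p 0 * u 0) * (P * U) := by simp only [mul_assoc]
      _ = star (u 0) * p 0 * u 0 * (star U * P * U) := by
          rw [← mul_assoc, h2.eq]; simp only [mul_assoc]

/-- Multilinear expansion of a sum over a box of products. -/
lemma my_sum_box_prod {R : Type*} [NonAssocSemiring R] :
    ∀ {n : ℕ} (B : Fin n → ℕ → R) (m : ℕ),
    ∑ k ∈ Fintype.piFinset (fun _ : Fin n => Finset.range m),
      (List.ofFn fun i => B i (k i)).prod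
    = (List.ofFn fun i => ∑ j ∈ Finset.range m, B i j).prod := by
  intro n
  induction n with
  | zero => intro B m; simp
  | succ n ih =>
    intro B m
    have hsplit :
        ∑ k ∈ Fintype.piFinset (fun _ : Fin (n+1) => Finset.range m),
          (List.ofFn fun i => B i (k i)).prod
        = ∑ p ∈ (Finset.range m) ×ˢ Fintype.piFinset (fun _ : Fin n => Finset.range m),
            (List.ofFn fun i => B i ((Fin.cons p.1 p.2 : Fin (n+1) → ℕ) i)).prod := by
      refine (Finset.sum_nbij' (fun k => (k 0, Fin.tail k)) (fun p => Fin.cons p.1 p.2)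
        ?_ ?_ ?_ ?_ ?_).symm.symm
      · intro k hk
        simp only [Fintype.mem_piFinset] at hk
        simp only [Finset.mem_product, Fintype.mem_piFinset]
        exact ⟨hk 0, fun i => hk i.succ⟩
      · intro p hp
        simp only [Finset.mem_product, Fintype.mem_piFinset] at hp
        simp only [Fintype.mem_piFinset]
        intro i
        refine Fin.cases ?_ ?_ i
        · simpa using hp.1
        · intro j; simpa using hp.2 j
      · intro k _; exact Fin.cons_self_tail k
      · intro p _; simp [Fin.tail_cons]
      · intro k _
        rw [Fin.cons_self_tail k]
    rw [hsplit, Finset.sum_product]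
    have hterm : ∀ (x : ℕ) (k : Fin n → ℕ),
        (List.ofFn fun i => B i ((Fin.cons x k : Fin (n+1) → ℕ) i)).prod
        = B 0 x * (List.ofFn fun i => B i.succ (k i)).prod := by
      intro x k
      rw [List.ofFn_succ]
      simp [List.prod_cons]
    calc ∑ x ∈ Finset.range m, ∑ k ∈ Fintype.piFinset (fun _ : Fin n => Finset.range m),
            (List.ofFn fun i => B i ((Fin.cons x k : Fin (n+1) → ℕ) i)).prod
        = ∑ x ∈ Finset.range m, B 0 x *
            ∑ k ∈ Fintype.piFinset (fun _ : Fin n => Finset.range m),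
              (List.ofFn fun i => B i.succ (k i)).prod := by
          refine Finset.sum_congr rfl fun x _ => ?_
          rw [Finset.mul_sum]
          exact Finset.sum_congr rfl fun k _ => hterm x k
      _ = (∑ x ∈ Finset.range m, B 0 x) *
            (List.ofFn fun i => ∑ j ∈ Finset.range m, B i.succ j).prod := by
          rw [ih (fun i => B i.succ) m, ← Finset.sum_mul]
      _ = (List.ofFn fun i => ∑ j ∈ Finset.range m, B i j).prod := by
          rw [List.ofFn_succ]
          simp [List.prod_cons]

/-- Telescoping sum for a single contraction. -/
lemma my_telescope {R : Type*} [Ring R] (a b : R) (m : ℕ) :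
    ∑ j ∈ Finset.range m, a ^ j * (1 - a * b) * b ^ j = 1 - a ^ m * b ^ m := by
  induction m with
  | zero => simp
  | succ m ih =>
    rw [Finset.sum_range_succ, ih]
    have : a ^ m * (1 - a * b) * b ^ m
        = a ^ m * b ^ m - a ^ (m+1) * b ^ (m+1) := by
      rw [pow_succ, pow_succ']
      noncomm_ring
    rw [this]
    abel

/-- For a doubly commuting pure tuple `T = (T 1, …, T n)` on a complex Hilbert space `H`,
with defect operator `D_{T*} = ∏ᵢ (I - TᵢTᵢ*)^{1/2}`, one has
`‖h‖² = ∑_{k ∈ ℕⁿ} ‖D_{T*} T*^k h‖²` for every `h ∈ H`. -/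
theorem stmt_9 {H : Type*} [NormedAddCommGroup H] [InnerProductSpace ℂ H] [CompleteSpace H]
    (n : ℕ) (T : Fin n → (H →L[ℂ] H))
    (hcontr : ∀ i, ‖T i‖ ≤ 1)
    (hcomm : ∀ i j, T i * T j = T j * T i)
    (hdc : ∀ i j, i ≠ j → T i * star (T j) = star (T j) * T i)
    (hpure : ∀ i (h : H),
      Filter.Tendsto (fun m : ℕ => ((star (T i)) ^ m) h) Filter.atTop (nhds 0))
    (D : Fin n → (H →L[ℂ] H))
    (hDpos : ∀ i, (D i).IsPositive) (hDsq : ∀ i, (D i) ^ 2 = 1 - T i * star (T i)) :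
    ∀ h : H,
      ∑' k : Fin n → ℕ,
        ‖(List.ofFn fun i => D i).prod
          (((List.ofFn fun i => (star (T i)) ^ (k i)).prod) h)‖ ^ 2 = ‖h‖ ^ 2 := by
  intro h
  -- basic commutation relations
  have cTT : ∀ i j, Commute (T i) (T j) := fun i j => hcomm i j
  have cTS : ∀ i j, i ≠ j → Commute (T i) (star (T j)) := fun i j hij => hdc i j hij
  have cST : ∀ i j, i ≠ j → Commute (star (T i)) (T j) := fun i j hij => (hdc j i hij.symm).symm
  have cSS : ∀ i j, Commute (star (T i)) (star (T j)) := fun i j => (cTT i j).star_star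
  have hDD : ∀ i, D i * D i = 1 - T i * star (T i) := fun i => by rw [← sq, hDsq i]
  have cPT : ∀ i j, i ≠ j → Commute (1 - T i * star (T i)) (T j) := fun i j hij =>
    (Commute.one_left (T j)).sub_left ((cTT i j).mul_left (cST i j hij))
  have cPS : ∀ i j, i ≠ j → Commute (1 - T i * star (T i)) (star (T j)) := fun i j hij =>
    (Commute.one_left _).sub_left ((cTS i j hij).mul_left (cSS i j))
  have cPP : ∀ i j, i ≠ j → Commute (1 - T i * star (T i)) (1 - T j * star (T j)) :=
    fun i j hij => (Commute.one_right _).sub_right ((cPT i j hij).mul_right (cPS i j hij))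
  have cDP : ∀ i j, i ≠ j → Commute (D i) (1 - T j * star (T j)) := by
    intro i j hij
    have : Commute (1 - T j * star (T j)) (D i) :=
      my_commute_of_sq (hDpos i) (by rw [hDD i]; exact cPP j i hij.symm)
    exact this.symm
  have cDD : ∀ i j, i ≠ j → Commute (D i) (D j) := fun i j hij =>
    my_commute_of_sq (hDpos j) (by rw [hDD j]; exact cDP i j hij)
  -- the summand
  set f : (Fin n → ℕ) → ℝ := fun k =>
    ‖(List.ofFn fun i => D i).prod
      (((List.ofFn fun i => (star (T i)) ^ (k i)).prod) h)‖ ^ 2 with hf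
  have hf0 : ∀ k, 0 ≤ f k := fun k => by positivity
  -- step 1 : collapse of the defect product
  have hsDp : star ((List.ofFn fun i => D i).prod) * (List.ofFn fun i => D i).prod
      = (List.ofFn fun i => 1 - T i * star (T i)).prod := by
    have key := my_star_prod_mul (fun i => D i) (fun _ => (1 : H →L[ℂ] H))
      (fun i j hij => cDD i j hij)
      (fun i j hij => by rw [(hDpos j).isSelfAdjoint.star_eq]; exact cDD i j hij)
      (fun _ _ _ => Commute.one_left _)
      (fun _ _ _ => Commute.one_left _)
    simp only [List.ofFn_const, List.prod_replicate, one_pow, mul_one] at key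
    rw [key]
    have hfun : (fun i => star (D i) * D i)
        = fun i => 1 - T i * star (T i) := by
      funext i
      rw [(hDpos i).isSelfAdjoint.star_eq, hDD i]
    rw [hfun]
  -- step 2 : conjugating by the backward shifts
  have hSks : ∀ k : Fin n → ℕ,
      star ((List.ofFn fun i => (star (T i)) ^ (k i)).prod) *
        ((List.ofFn fun i => 1 - T i * star (T i)).prod) *
        (List.ofFn fun i => (star (T i)) ^ (k i)).prod
      = (List.ofFn fun i =>
          T i ^ (k i) * (1 - T i * star (T i)) * (star (T i)) ^ (k i)).prod := by
    intro k
    have key := my_star_prod_mul (fun i => (star (T i)) ^ (k i))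
      (fun i => 1 - T i * star (T i))
      (fun i j hij => (cSS i j).pow_pow _ _)
      (fun i j hij => by
        rw [star_pow, star_star]
        exact (cST i j hij).pow_pow _ _)
      (fun i j hij => (cPS i j hij).pow_right _)
      (fun i j hij => by rw [star_pow, star_star]; exact (cPT i j hij).pow_right _)
    rw [key]
    have hfun : (fun i => star ((star (T i)) ^ (k i)) * (1 - T i * star (T i)) *
          (star (T i)) ^ (k i))
        = fun i => T i ^ (k i) * (1 - T i * star (T i)) * (star (T i)) ^ (k i) := by
      funext i
      rw [star_pow, star_star]
    rw [hfun]
  -- step 3 : the norm of each term as a quadratic form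
  have hfk : ∀ k : Fin n → ℕ,
      f k = RCLike.re (inner ℂ ((List.ofFn fun i =>
        T i ^ (k i) * (1 - T i * star (T i)) * (star (T i)) ^ (k i)).prod h) h : ℂ) := by
    intro k
    set Dp := (List.ofFn fun i => D i).prod with hDp
    set Sk := (List.ofFn fun i => (star (T i)) ^ (k i)).prod with hSk
    have happ : Dp (Sk h) = (Dp * Sk) h := rfl
    have hMM : star (Dp * Sk) * (Dp * Sk)
        = (List.ofFn fun i =>
            T i ^ (k i) * (1 - T i * star (T i)) * (star (T i)) ^ (k i)).prod := by
      rw [star_mul]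
      calc star Sk * star Dp * (Dp * Sk)
          = star Sk * (star Dp * Dp) * Sk := by simp only [mul_assoc]
        _ = star Sk * (List.ofFn fun i => 1 - T i * star (T i)).prod * Sk := by rw [hsDp]
        _ = _ := hSks k
    have hinner : (inner ℂ ((Dp * Sk) h) ((Dp * Sk) h) : ℂ)
        = inner ℂ ((star (Dp * Sk) * (Dp * Sk)) h) h := by
      rw [ContinuousLinearMap.mul_apply (star (Dp * Sk)),
        ContinuousLinearMap.star_eq_adjoint, ContinuousLinearMap.adjoint_inner_left]
    rw [hf]
    simp only []
    rw [happ, ← inner_self_eq_norm_sq (𝕜 := ℂ), hinner, hMM]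
  -- partial sums over boxes
  set F : ℕ → ℝ := fun m =>
    ∑ k ∈ Fintype.piFinset (fun _ : Fin n => Finset.range m), f k with hF
  have hFm : ∀ m, F m = RCLike.re (inner ℂ
      ((List.ofFn fun i => 1 - T i ^ m * (star (T i)) ^ m).prod h) h : ℂ) := by
    intro m
    have hsum : ∑ k ∈ Fintype.piFinset (fun _ : Fin n => Finset.range m),
        (List.ofFn fun i =>
          T i ^ (k i) * (1 - T i * star (T i)) * (star (T i)) ^ (k i)).prod
        = (List.ofFn fun i => 1 - T i ^ m * (star (T i)) ^ m).prod := by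
      rw [my_sum_box_prod (fun i t => T i ^ t * (1 - T i * star (T i)) * (star (T i)) ^ t) m]
      have hfun : (fun i => ∑ j ∈ Finset.range m,
            T i ^ j * (1 - T i * star (T i)) * (star (T i)) ^ j)
          = fun i => 1 - T i ^ m * (star (T i)) ^ m := by
        funext i
        exact my_telescope (T i) (star (T i)) m
      rw [hfun]
    calc F m = ∑ k ∈ Fintype.piFinset (fun _ : Fin n => Finset.range m),
          RCLike.re (inner ℂ ((List.ofFn fun i =>
            T i ^ (k i) * (1 - T i * star (T i)) * (star (T i)) ^ (k i)).prod h) h : ℂ) :=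
        Finset.sum_congr rfl fun k _ => hfk k
      _ = RCLike.re (inner ℂ ((∑ k ∈ Fintype.piFinset (fun _ : Fin n => Finset.range m),
            (List.ofFn fun i =>
              T i ^ (k i) * (1 - T i * star (T i)) * (star (T i)) ^ (k i)).prod) h) h : ℂ) := by
        rw [ContinuousLinearMap.sum_apply, sum_inner, map_sum]
      _ = _ := by rw [hsum]
  -- convergence of the box sums
  have hSnorm : ∀ i, ‖star (T i)‖ ≤ 1 := fun i => by
    rw [norm_star]; exact hcontr i
  have hbound : ∀ (i : Fin n) (m : ℕ) (x : H),
      ‖((1 : H →L[ℂ] H) - T i ^ m * (star (T i)) ^ m) x‖ ≤ 2 * ‖x‖ := by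
    intro i m x
    have happ : ((1 : H →L[ℂ] H) - T i ^ m * (star (T i)) ^ m) x
        = x - (T i ^ m) (((star (T i)) ^ m) x) := by
      simp [ContinuousLinearMap.sub_apply, ContinuousLinearMap.mul_apply]
    rw [happ]
    have h1 : ‖(T i ^ m) (((star (T i)) ^ m) x)‖ ≤ ‖x‖ :=
      le_trans (my_pow_bound (T i) (hcontr i) m _) (my_pow_bound (star (T i)) (hSnorm i) m x)
    calc ‖x - (T i ^ m) (((star (T i)) ^ m) x)‖
        ≤ ‖x‖ + ‖(T i ^ m) (((star (T i)) ^ m) x)‖ := norm_sub_le _ _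
      _ ≤ ‖x‖ + ‖x‖ := by linarith
      _ = 2 * ‖x‖ := by ring
  have hlim : ∀ (i : Fin n) (x : H),
      Tendsto (fun m => ((1 : H →L[ℂ] H) - T i ^ m * (star (T i)) ^ m) x) atTop (nhds x) := by
    intro i x
    have h0 : Tendsto (fun m => (T i ^ m) (((star (T i)) ^ m) x)) atTop (nhds 0) := by
      apply squeeze_zero_norm (fun m => my_pow_bound (T i) (hcontr i) m (((star (T i)) ^ m) x))
      simpa using (hpure i x).norm
    have happ : ∀ m : ℕ, ((1 : H →L[ℂ] H) - T i ^ m * (star (T i)) ^ m) x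
        = x - (T i ^ m) (((star (T i)) ^ m) x) := by
      intro m
      simp [ContinuousLinearMap.sub_apply, ContinuousLinearMap.mul_apply]
    simp only [happ]
    simpa using tendsto_const_nhds.sub h0
  have hQ : Tendsto (fun m =>
      (List.ofFn fun i => (1 : H →L[ℂ] H) - T i ^ m * (star (T i)) ^ m).prod h)
      atTop (nhds h) :=
    my_tendsto_prod (fun i m => (1 : H →L[ℂ] H) - T i ^ m * (star (T i)) ^ m) hbound hlim h
  have hFtend : Tendsto F atTop (nhds (‖h‖ ^ 2)) := by
    have h1 : Tendsto (fun m => (inner ℂ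
        ((List.ofFn fun i => (1 : H →L[ℂ] H) - T i ^ m * (star (T i)) ^ m).prod h) h : ℂ))
        atTop (nhds (inner ℂ h h : ℂ)) := hQ.inner tendsto_const_nhds
    have h2 := ((RCLike.continuous_re).tendsto _).comp h1
    have h3 : RCLike.re (inner ℂ h h : ℂ) = ‖h‖ ^ 2 := inner_self_eq_norm_sq h
    rw [h3] at h2
    have : F = fun m => RCLike.re (inner ℂ
        ((List.ofFn fun i => (1 : H →L[ℂ] H) - T i ^ m * (star (T i)) ^ m).prod h) h : ℂ) := by
      funext m; exact hFm m
    rw [this]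
    exact h2
  -- monotonicity and bounds
  have hmono : Monotone F := by
    intro m m' hmm'
    exact Finset.sum_le_sum_of_subset_of_nonneg
      (Fintype.piFinset_subset _ _ fun i => Finset.range_subset_range.mpr hmm')
      (fun k _ _ => hf0 k)
  have hFle : ∀ m, F m ≤ ‖h‖ ^ 2 := fun m => hmono.ge_of_tendsto hFtend m
  have hLUB : IsLUB (Set.range fun s : Finset (Fin n → ℕ) => ∑ k ∈ s, f k) (‖h‖ ^ 2) := by
    constructor
    · rintro - ⟨s, rfl⟩
      set m := 1 + s.sup (fun k => Finset.univ.sup k) with hm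
      have hsub : s ⊆ Fintype.piFinset (fun _ : Fin n => Finset.range m) := by
        intro k hk
        simp only [Fintype.mem_piFinset, Finset.mem_range]
        intro i
        have h1 : k i ≤ Finset.univ.sup k := Finset.le_sup (Finset.mem_univ i)
        have h2 : Finset.univ.sup k ≤ s.sup (fun k => Finset.univ.sup k) := Finset.le_sup hk
        omega
      exact le_trans
        (Finset.sum_le_sum_of_subset_of_nonneg hsub fun k _ _ => hf0 k) (hFle m)
    · intro b hb
      refine le_of_tendsto hFtend (Filter.Eventually.of_forall fun m => ?_)
      exact hb ⟨_, rfl⟩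
  exact (hasSum_of_isLUB_of_nonneg (‖h‖ ^ 2) hf0 hLUB).tsum_eq
end

section
/- Let T = (T₁, …, Tₙ) be a doubly commuting pure tuple on H. Then the map L_T : H → ℓ²(ℕⁿ, D_{T*}) defined by (L_T h)(k) = D_{T*} T*^k h is an isometry satisfying L_T Tᵢ* = Sᵢ* L_T for each i, where Sᵢ is the i-th coordinate shift on ℓ²(ℕⁿ, D_{T*}). -/
open scoped NNReal ENNReal

set_option synthInstance.maxHeartbeats 1000000
set_option maxHeartbeats 1000000

section Aux

variable {H : Type*} [NormedAddCommGroup H] [InnerProductSpace ℂ H] [CompleteSpace H]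

lemma aux_commute_of_mem_elemental {a b x : H →L[ℂ] H}
    (hx : x ∈ StarAlgebra.elemental ℂ a)
    (h1 : Commute b a) (h2 : Commute b (star a)) : Commute b x := by
  induction hx using StarAlgebra.elemental.induction_on with
  | self => exact h1
  | star_self => exact h2
  | algebraMap r => exact Algebra.commute_algebraMap_right r b
  | add u hu v hv pu pv => exact pu.add_right pv
  | mul u hu v hv pu pv => exact pu.mul_right pv
  | closure s hs hP v hv =>
      have hcl : IsClosed {y : H →L[ℂ] H | Commute b y} := by
        have : {y : H →L[ℂ] H | Commute b y} = (fun y => b * y - y * b) ⁻¹' {0} := by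
          ext y; simp [Commute, SemiconjBy, sub_eq_zero]
        rw [this]
        exact (isClosed_singleton.preimage (by fun_prop))
      exact hcl.closure_subset_iff.mpr hP hv

lemma aux_cfc_mem_elemental (g : ℂ → ℂ) (a : H →L[ℂ] H) :
    cfc g a ∈ StarAlgebra.elemental ℂ a := by
  refine cfc_cases (· ∈ StarAlgebra.elemental ℂ a) a g (zero_mem _) fun hg ha => ?_
  rw [cfcHom_eq_of_isStarNormal]
  exact Subtype.coe_prop _

lemma aux_commute_sqrt {a b d : H →L[ℂ] H} (hd : 0 ≤ d) (hsq : d * d = a)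
    (h1 : Commute b a) : Commute b d := by
  have hdsa : IsSelfAdjoint d := IsSelfAdjoint.of_nonneg hd
  have ha : 0 ≤ a := hsq ▸ (by simpa [hdsa.star_eq] using star_mul_self_nonneg d)
  have hsa : IsSelfAdjoint a := IsSelfAdjoint.of_nonneg ha
  have hda : CFC.sqrt a = d := CFC.sqrt_unique hsq hd
  rw [← hda, CFC.sqrt, cfcₙ_nnreal_eq_real _ _ ha, cfcₙ_real_eq_complex _ hsa,
    cfcₙ_eq_cfc (hf := by exact Continuous.continuousOn (Complex.continuous_ofReal.comp <| NNReal.continuous_coe.comp <| NNReal.continuous_sqrt.comp <| continuous_real_toNNReal.comp Complex.continuous_re)) (by simp)]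
  exact aux_commute_of_mem_elemental (aux_cfc_mem_elemental _ a) h1 (by rwa [hsa.star_eq])

open scoped InnerProductSpace in
lemma aux_defect {Ti Di : H →L[ℂ] H} (hsa : IsSelfAdjoint Di)
    (hsq : Di * Di = 1 - Ti * star Ti) (z : H) :
    ‖Di z‖ ^ 2 = ‖z‖ ^ 2 - ‖(star Ti) z‖ ^ 2 := by
  have hadj : ContinuousLinearMap.adjoint Di = Di := by
    rw [← ContinuousLinearMap.star_eq_adjoint]; exact hsa
  have e1 : (⟪Di z, Di z⟫_ℂ) = ⟪z, z⟫_ℂ - ⟪(star Ti) z, (star Ti) z⟫_ℂ := by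
    calc ⟪Di z, Di z⟫_ℂ = ⟪z, Di (Di z)⟫_ℂ := by
          have h4 := ContinuousLinearMap.adjoint_inner_left Di (Di z) z
          rw [hadj] at h4
          exact h4
      _ = ⟪z, z⟫_ℂ - ⟪z, Ti ((star Ti) z)⟫_ℂ := by
          have h2 : Di (Di z) = z - Ti ((star Ti) z) := by
            have h3 := congrArg (fun (A : H →L[ℂ] H) => A z) hsq
            simpa [ContinuousLinearMap.mul_apply, ContinuousLinearMap.sub_apply]
              using h3
          rw [h2, inner_sub_right]
      _ = ⟪z, z⟫_ℂ - ⟪(star Ti) z, (star Ti) z⟫_ℂ := by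
          congr 1
          rw [ContinuousLinearMap.star_eq_adjoint,
            ContinuousLinearMap.adjoint_inner_left]
  have e2 := congrArg RCLike.re e1
  simpa only [map_sub, inner_self_eq_norm_sq] using e2

open Filter in
lemma aux_oneParseval {Ti Di : H →L[ℂ] H} (hsa : IsSelfAdjoint Di)
    (hsq : Di * Di = 1 - Ti * star Ti)
    (hpure : ∀ y : H, Tendsto (fun m : ℕ => ((star Ti) ^ m) y) atTop (nhds 0))
    (y : H) :
    HasSum (fun m : ℕ => ‖Di (((star Ti) ^ m) y)‖ ^ 2) (‖y‖ ^ 2) := by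
  set f : ℕ → ℝ := fun m => ‖((star Ti) ^ m) y‖ ^ 2 with hf
  have hterm : ∀ m : ℕ, ‖Di (((star Ti) ^ m) y)‖ ^ 2 = f m - f (m + 1) := by
    intro m
    have h5 : (star Ti) (((star Ti) ^ m) y) = ((star Ti) ^ (m + 1)) y := by
      rw [pow_succ']; simp [ContinuousLinearMap.mul_apply]
    rw [aux_defect hsa hsq, h5]
  have hpartial : ∀ N : ℕ, ∑ m ∈ Finset.range N, ‖Di (((star Ti) ^ m) y)‖ ^ 2
      = ‖y‖ ^ 2 - f N := by
    intro N
    have : ∑ m ∈ Finset.range N, ‖Di (((star Ti) ^ m) y)‖ ^ 2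
        = ∑ m ∈ Finset.range N, (f m - f (m + 1)) :=
      Finset.sum_congr rfl fun m _ => hterm m
    rw [this, Finset.sum_range_sub' f N]
    simp [hf]
  have hlim : Tendsto f atTop (nhds 0) := by
    have h1 := ((hpure y).norm).pow 2
    rw [norm_zero, zero_pow two_ne_zero] at h1
    exact h1
  have hsummable : Summable (fun m : ℕ => ‖Di (((star Ti) ^ m) y)‖ ^ 2) := by
    apply summable_of_sum_range_le (c := ‖y‖ ^ 2)
      (fun m => by positivity)
    intro N
    rw [hpartial N]
    have : (0:ℝ) ≤ f N := by positivity
    linarith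
  rw [hsummable.hasSum_iff_tendsto_nat]
  simp only [hpartial]
  simpa using tendsto_const_nhds.sub hlim

open scoped ENNReal

lemma aux_hasSum_ennreal {ι : Type*} {f : ι → H} {y : H}
    (h : HasSum (fun i => ‖f i‖ ^ 2) (‖y‖ ^ 2)) :
    ∑' i, ((‖f i‖₊ : ℝ≥0∞) ^ 2) = ((‖y‖₊ : ℝ≥0∞) ^ 2) := by
  have h1 : HasSum (fun i => (‖f i‖₊ ^ 2 : ℝ≥0)) (‖y‖₊ ^ 2) := by
    apply NNReal.hasSum_coe.mp
    simpa [NNReal.coe_pow, coe_nnnorm] using h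
  calc ∑' i, ((‖f i‖₊ : ℝ≥0∞) ^ 2) = ∑' i, ((‖f i‖₊ ^ 2 : ℝ≥0) : ℝ≥0∞) := by
        simp [ENNReal.coe_pow]
    _ = ((‖y‖₊ ^ 2 : ℝ≥0) : ℝ≥0∞) := by
        rw [← ENNReal.coe_tsum h1.summable, h1.tsum_eq]
    _ = ((‖y‖₊ : ℝ≥0∞) ^ 2) := by simp [ENNReal.coe_pow]

open Filter in
lemma aux_multiParseval : ∀ (n : ℕ) (T D : Fin n → H →L[ℂ] H),
    (∀ i j : Fin n, i ≠ j → Commute (D j) (star (T i))) →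
    (∀ (i : Fin n) (y : H),
      HasSum (fun m : ℕ => ‖(D i) (((star (T i)) ^ m) y)‖ ^ 2) (‖y‖ ^ 2)) →
    ∀ x : H,
      ∑' k : Fin n → ℕ,
        ((‖(List.ofFn fun i => D i).prod
          ((List.ofFn fun i => (star (T i)) ^ (k i)).prod x)‖₊ : ℝ≥0∞) ^ 2)
        = ((‖x‖₊ : ℝ≥0∞) ^ 2)
  | 0, T, D, h2, h4, x => by
      rw [tsum_eq_single (fun _ => 0) (fun b hb => absurd (Subsingleton.elim b _) hb)]
      simp
  | (n+1), T, D, h2, h4, x => by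
      have hterm : ∀ (m : ℕ) (k' : Fin n → ℕ),
          (List.ofFn fun i => D i).prod
            ((List.ofFn fun i : Fin (n+1) =>
              (star (T i)) ^ ((Fin.cons m k' : Fin (n+1) → ℕ) i)).prod x)
          = D 0 (((star (T 0)) ^ m)
              ((List.ofFn fun i : Fin n => D i.succ).prod
                ((List.ofFn fun i : Fin n => (star (T i.succ)) ^ (k' i)).prod x))) := by
        intro m k'
        rw [List.ofFn_succ, List.ofFn_succ, List.prod_cons, List.prod_cons]
        simp only [Fin.cons_zero, Fin.cons_succ, ContinuousLinearMap.mul_apply]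
        congr 1
        have hc : Commute ((star (T 0)) ^ m)
            ((List.ofFn fun i : Fin n => D i.succ).prod) := by
          apply Commute.list_prod_right
          intro a ha
          rw [List.mem_ofFn] at ha
          obtain ⟨i, rfl⟩ := ha
          exact (Commute.pow_left ((h2 0 i.succ (Fin.succ_ne_zero i).symm).symm) m)
        have := congrArg (fun (A : H →L[ℂ] H) =>
          A ((List.ofFn fun i : Fin n => (star (T i.succ)) ^ (k' i)).prod x)) hc.eq
        simpa [ContinuousLinearMap.mul_apply] using this.symm
      rw [← (Fin.consEquiv (fun _ : Fin (n+1) => ℕ)).tsum_eq, ENNReal.tsum_prod',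
        ENNReal.tsum_comm]
      simp only [Fin.consEquiv_apply]
      have step1 : ∀ k' : Fin n → ℕ,
          (∑' m : ℕ, ((‖(List.ofFn fun i => D i).prod
            ((List.ofFn fun i : Fin (n+1) =>
              (star (T i)) ^ ((Fin.cons m k' : Fin (n+1) → ℕ) i)).prod x)‖₊ : ℝ≥0∞) ^ 2))
          = ((‖(List.ofFn fun i : Fin n => D i.succ).prod
              ((List.ofFn fun i : Fin n => (star (T i.succ)) ^ (k' i)).prod x)‖₊ : ℝ≥0∞) ^ 2) := by
        intro k'
        rw [tsum_congr (fun m => by rw [hterm m k'])]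
        exact aux_hasSum_ennreal (h4 0 _)
      rw [tsum_congr step1]
      exact aux_multiParseval n (fun i => T i.succ) (fun i => D i.succ)
        (fun i j hij => h2 i.succ j.succ (fun hh => hij (Fin.succ_injective n hh)))
        (fun i y => h4 i.succ y) x

lemma aux_prod_shift {M : Type*} [Monoid M] : ∀ (n : ℕ) (A : Fin n → M),
    (∀ i j, Commute (A i) (A j)) → ∀ (k : Fin n → ℕ) (i : Fin n),
    (List.ofFn fun j => A j ^ ((k + Pi.single i 1 : Fin n → ℕ) j)).prod
      = (List.ofFn fun j => A j ^ (k j)).prod * A i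
  | 0, A, hA, k, i => i.elim0
  | (n+1), A, hA, k, i => by
      rw [List.ofFn_succ, List.ofFn_succ, List.prod_cons, List.prod_cons]
      have hcomm_tail : Commute (A 0)
          ((List.ofFn fun j : Fin n => A j.succ ^ (k j.succ)).prod) := by
        apply Commute.list_prod_right
        intro a ha
        rw [List.mem_ofFn] at ha
        obtain ⟨j, rfl⟩ := ha
        exact (hA 0 j.succ).pow_right _
      rcases i.eq_zero_or_eq_succ with rfl | ⟨j, rfl⟩
      · have h0 : (k + Pi.single (0 : Fin (n+1)) 1 : Fin (n+1) → ℕ) 0 = k 0 + 1 := by simp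
        have hs : ∀ l : Fin n, (k + Pi.single (0 : Fin (n+1)) 1 : Fin (n+1) → ℕ) l.succ
            = k l.succ := by
          intro l
          simp [Pi.single_eq_of_ne (Fin.succ_ne_zero l)]
        simp only [h0, hs]
        rw [pow_succ, mul_assoc, mul_assoc, hcomm_tail.eq]
      · have h0 : (k + Pi.single (j.succ : Fin (n+1)) 1 : Fin (n+1) → ℕ) 0 = k 0 := by
          simp [Pi.single_eq_of_ne (Fin.succ_ne_zero j).symm]
        have hs : ∀ l : Fin n, (k + Pi.single (j.succ : Fin (n+1)) 1 : Fin (n+1) → ℕ) l.succ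
            = (Fin.tail k + Pi.single j 1 : Fin n → ℕ) l := by
          intro l
          simp only [Pi.add_apply, Fin.tail]
          congr 1
          rcases eq_or_ne l j with rfl | hlj
          · simp
          · rw [Pi.single_eq_of_ne hlj,
              Pi.single_eq_of_ne (fun hh => hlj (Fin.succ_injective n hh))]
        simp only [h0, hs]
        rw [aux_prod_shift n (fun l => A l.succ) (fun a b => hA a.succ b.succ) (Fin.tail k) j]
        rw [mul_assoc]
        rfl

end Aux

/-- For a doubly commuting pure tuple `T` on `H`, the map
`(L_T h)(k) = D_{T*} T*^k h` is a well-defined isometry `H → ℓ²(ℕⁿ, D_{T*})` satisfying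
`L_T Tᵢ* = Sᵢ* L_T` for the coordinate shifts `Sᵢ`, i.e.
`(L_T(Tᵢ* h))(k) = (L_T h)(k + eᵢ)`. -/
theorem stmt_10 {H : Type*} [NormedAddCommGroup H] [InnerProductSpace ℂ H] [CompleteSpace H]
    (n : ℕ) (T : Fin n → (H →L[ℂ] H))
    (hcontr : ∀ i, ‖T i‖ ≤ 1)
    (hcomm : ∀ i j, T i * T j = T j * T i)
    (hdc : ∀ i j, i ≠ j → T i * star (T j) = star (T j) * T i)
    (hpure : ∀ i (h : H),
      Filter.Tendsto (fun m : ℕ => ((star (T i)) ^ m) h) Filter.atTop (nhds 0))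
    (D : Fin n → (H →L[ℂ] H))
    (hDpos : ∀ i, (D i).IsPositive) (hDsq : ∀ i, (D i) ^ 2 = 1 - T i * star (T i)) :
    ∃ L : H →ₗᵢ[ℂ] lp (fun _ : Fin n → ℕ => H) 2,
      (∀ (h : H) (k : Fin n → ℕ),
        (L h) k = (List.ofFn fun i => D i).prod
          (((List.ofFn fun i => (star (T i)) ^ (k i)).prod) h)) ∧
      (∀ i (h : H) (k : Fin n → ℕ),
        (L (star (T i) h)) k = (L h) (k + Pi.single i 1)) := by
  classical
  set P : H →L[ℂ] H := (List.ofFn fun i => D i).prod with hP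
  set Q : (Fin n → ℕ) → (H →L[ℂ] H) :=
    (fun k => (List.ofFn fun i => (star (T i)) ^ (k i)).prod) with hQ
  have hDsq' : ∀ i, D i * D i = 1 - T i * star (T i) := fun i => by
    rw [← sq]; exact hDsq i
  have hDsa : ∀ i, IsSelfAdjoint (D i) := fun i => (hDpos i).isSelfAdjoint
  have hstarcomm : ∀ i j : Fin n, Commute (star (T i)) (star (T j)) := by
    intro i j
    exact Commute.star_star (show Commute (T i) (T j) from hcomm i j)
  have h2 : ∀ i j : Fin n, i ≠ j → Commute (D j) (star (T i)):= by
    intro i j hij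
    refine (aux_commute_sqrt
      ((ContinuousLinearMap.nonneg_iff_isPositive (D j)).mpr (hDpos j))
      (hDsq' j) ?_).symm
    have c1 : Commute (star (T i)) (T j) :=
      (show Commute (T j) (star (T i)) from hdc j i (fun hh => hij hh.symm)).symm
    exact (Commute.one_right _).sub_right (c1.mul_right (hstarcomm i j))
  have h4 : ∀ (i : Fin n) (y : H),
      HasSum (fun m : ℕ => ‖(D i) (((star (T i)) ^ m) y)‖ ^ 2) (‖y‖ ^ 2) :=
    fun i y => aux_oneParseval (hDsa i) (hDsq' i) (hpure i) y
  have key : ∀ x : H,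
      ∑' k : Fin n → ℕ, ((‖P (Q k x)‖₊ : ℝ≥0∞) ^ 2) = ((‖x‖₊ : ℝ≥0∞) ^ 2) := by
    intro x
    have := aux_multiParseval n T D h2 h4 x
    simpa [hP, hQ, ContinuousLinearMap.mul_apply] using this
  have h6 : ∀ x : H, Summable (fun k : Fin n → ℕ => (‖P (Q k x)‖₊ ^ 2 : ℝ≥0)) := by
    intro x
    rw [← ENNReal.tsum_coe_ne_top_iff_summable]
    have : ∑' k : Fin n → ℕ, ((‖P (Q k x)‖₊ ^ 2 : ℝ≥0) : ℝ≥0∞) = ((‖x‖₊ : ℝ≥0∞) ^ 2) := by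
      rw [← key x]
      exact tsum_congr fun k => by rw [ENNReal.coe_pow]
    rw [this]
    exact ENNReal.pow_ne_top ENNReal.coe_ne_top
  have h7 : ∀ x : H, ∑' k : Fin n → ℕ, (‖P (Q k x)‖₊ ^ 2 : ℝ≥0) = ‖x‖₊ ^ 2 := by
    intro x
    apply ENNReal.coe_injective
    rw [ENNReal.coe_tsum (h6 x)]
    have : ∑' k : Fin n → ℕ, ((‖P (Q k x)‖₊ ^ 2 : ℝ≥0) : ℝ≥0∞) = ((‖x‖₊ : ℝ≥0∞) ^ 2) := by
      rw [← key x]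
      exact tsum_congr fun k => by rw [ENNReal.coe_pow]
    rw [this, ENNReal.coe_pow]
  have hsummable : ∀ x : H, Summable (fun k : Fin n → ℕ => ‖P (Q k x)‖ ^ 2) := by
    intro x
    have := NNReal.summable_coe.mpr (h6 x)
    simpa [NNReal.coe_pow, coe_nnnorm] using this
  have htsum : ∀ x : H, ∑' k : Fin n → ℕ, ‖P (Q k x)‖ ^ 2 = ‖x‖ ^ 2 := by
    intro x
    have := congrArg (fun q : ℝ≥0 => (q : ℝ)) (h7 x)
    simp only [NNReal.coe_tsum, NNReal.coe_pow, coe_nnnorm] at this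
    exact this
  have h2toReal : ((2 : ℝ≥0∞).toReal) = (2 : ℝ) := by simp
  have hrpow : ∀ r : ℝ, r ^ ((2 : ℝ≥0∞).toReal) = r ^ (2 : ℕ) := by
    intro r
    rw [h2toReal, show (2:ℝ) = ((2:ℕ):ℝ) by norm_num, Real.rpow_natCast]
  have hmem : ∀ x : H, Memℓp (fun k : Fin n → ℕ => P (Q k x)) 2 := by
    intro x
    apply memℓp_gen
    have : (fun k : Fin n → ℕ => ‖P (Q k x)‖ ^ ((2 : ℝ≥0∞).toReal))
        = fun k : Fin n → ℕ => ‖P (Q k x)‖ ^ (2 : ℕ) := by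
      funext k; exact hrpow _
    rw [this]
    exact hsummable x
  let Lf : H →ₗ[ℂ] lp (fun _ : Fin n → ℕ => H) 2 :=
    { toFun := fun x => ⟨fun k => P (Q k x), hmem x⟩
      map_add' := by
        intro a b
        apply lp.ext
        rw [lp.coeFn_add]
        funext k
        simp [Pi.add_apply, map_add]
      map_smul' := by
        intro c a
        apply lp.ext
        rw [lp.coeFn_smul]
        funext k
        simp [Pi.smul_apply, map_smul] }
  have hLf_apply : ∀ (x : H) (k : Fin n → ℕ), (Lf x) k = P (Q k x) := fun x k => rfl
  have hnorm : ∀ x : H, ‖Lf x‖ = ‖x‖ := by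
    intro x
    have h1 : ‖Lf x‖ ^ ((2:ℝ≥0∞).toReal) = ∑' k : Fin n → ℕ, ‖(Lf x) k‖ ^ ((2:ℝ≥0∞).toReal) :=
      lp.norm_rpow_eq_tsum (by rw [h2toReal]; norm_num) (Lf x)
    have h2' : ‖Lf x‖ ^ (2:ℕ) = ‖x‖ ^ (2:ℕ) := by
      calc ‖Lf x‖ ^ (2:ℕ) = ‖Lf x‖ ^ ((2:ℝ≥0∞).toReal) := (hrpow _).symm
        _ = ∑' k : Fin n → ℕ, ‖(Lf x) k‖ ^ ((2:ℝ≥0∞).toReal) := h1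
        _ = ∑' k : Fin n → ℕ, ‖P (Q k x)‖ ^ (2:ℕ) := by
            exact tsum_congr fun k => by rw [hLf_apply, hrpow]
        _ = ‖x‖ ^ (2:ℕ) := htsum x
    have hs := congrArg Real.sqrt h2'
    rwa [Real.sqrt_sq (norm_nonneg _), Real.sqrt_sq (norm_nonneg _)] at hs
  refine ⟨⟨Lf, hnorm⟩, ?_, ?_⟩
  · intro h k
    exact hLf_apply h k
  · intro i h k
    have hshift : Q (k + Pi.single i 1) = Q k * star (T i) := by
      rw [hQ]
      exact aux_prod_shift n (fun j => star (T j)) hstarcomm k i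
    show (Lf ((star (T i)) h)) k = (Lf h) (k + Pi.single i 1)
    rw [hLf_apply, hLf_apply, hshift]
    simp [ContinuousLinearMap.mul_apply]
end

section
/- Let T = (T₁, …, Tₙ) be a doubly commuting pure tuple on H. Then ran L_T is a jointly (S₁*, …, Sₙ*)-invariant closed subspace Q of ℓ²(ℕⁿ, D_{T*}), and for each i, Tᵢ is unitarily equivalent (via L_T) to P_Q Sᵢ|_Q, where Sᵢ are the coordinate shifts. Thus (S₁, …, Sₙ) on ℓ²(ℕⁿ, D_{T*}) is an isometric dilation of T. -/
open scoped ComplexInnerProductSpace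

private lemma ofFn_prod_update' {M : Type*} [Monoid M] : ∀ {n : ℕ} (f : Fin n → M) (i : Fin n)
    (c : M), (∀ j, Commute c (f j)) →
    (List.ofFn (Function.update f i (f i * c))).prod = (List.ofFn f).prod * c := by
  intro n
  induction n with
  | zero => exact fun f i => i.elim0
  | succ m ih =>
    intro f i c hc
    rcases Fin.eq_zero_or_eq_succ i with rfl | ⟨j, rfl⟩
    · have h1 : (fun x : Fin m => Function.update f 0 (f 0 * c) x.succ) = fun x => f x.succ := by
        funext j
        simp [Function.update_of_ne (Fin.succ_ne_zero j)]
      rw [List.ofFn_succ, List.ofFn_succ, h1, List.prod_cons, List.prod_cons,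
        Function.update_self, mul_assoc, mul_assoc]
      congr 1
      have hcomm' : Commute c (List.ofFn fun x : Fin m => f x.succ).prod :=
        Commute.list_prod_right _ _ (by
          intro x hx
          obtain ⟨j, rfl⟩ := List.mem_ofFn.mp hx
          exact hc _)
      exact hcomm'.eq
    · have h1 : (fun x : Fin m => Function.update f j.succ (f j.succ * c) x.succ)
          = Function.update (fun x => f x.succ) j (f j.succ * c) := by
        funext x
        rcases eq_or_ne x j with rfl | hx
        · simp
        · simp [Function.comp, Function.update_of_ne hx,
            Function.update_of_ne (fun h => hx (Fin.succ_injective _ h))]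
      rw [List.ofFn_succ, List.ofFn_succ, h1, List.prod_cons, List.prod_cons,
        Function.update_of_ne (Fin.succ_ne_zero j).symm,
        ih (fun x => f x.succ) j c (fun x => hc x.succ), mul_assoc]




/-- For a doubly commuting pure tuple `T` on `H`, the range `Q` of the dilation isometry
`L_T : H → ℓ²(ℕⁿ, D_{T*})` is a closed, jointly `(S₁*, …, Sₙ*)`-invariant subspace, and via
`L_T` each `Tᵢ` is unitarily equivalent to `P_Q Sᵢ|_Q`; the coordinate shifts `Sᵢ` are
isometries, so `(S₁, …, Sₙ)` is an isometric dilation of `T`. -/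
theorem stmt_13 {H : Type*} [NormedAddCommGroup H] [InnerProductSpace ℂ H] [CompleteSpace H]
    (n : ℕ) (T : Fin n → (H →L[ℂ] H))
    (hcontr : ∀ i, ‖T i‖ ≤ 1)
    (hcomm : ∀ i j, T i * T j = T j * T i)
    (hdc : ∀ i j, i ≠ j → T i * star (T j) = star (T j) * T i)
    (hpure : ∀ i (h : H),
      Filter.Tendsto (fun m : ℕ => ((star (T i)) ^ m) h) Filter.atTop (nhds 0))
    (D : Fin n → (H →L[ℂ] H))
    (hDpos : ∀ i, (D i).IsPositive) (hDsq : ∀ i, (D i) ^ 2 = 1 - T i * star (T i))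
    (L : H →ₗᵢ[ℂ] lp (fun _ : Fin n → ℕ => H) 2)
    (hL : ∀ (h : H) (k : Fin n → ℕ),
      (L h) k = (List.ofFn fun i => D i).prod
        (((List.ofFn fun i => (star (T i)) ^ (k i)).prod) h))
    (S : Fin n → (lp (fun _ : Fin n → ℕ => H) 2 →L[ℂ] lp (fun _ : Fin n → ℕ => H) 2))
    (hS : ∀ i (a : lp (fun _ : Fin n → ℕ => H) 2) (k : Fin n → ℕ),
      (S i a) k = if k i = 0 then 0 else a (k - Pi.single i 1))
    (P : lp (fun _ : Fin n → ℕ => H) 2 →L[ℂ] lp (fun _ : Fin n → ℕ => H) 2)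
    (hPidem : IsIdempotentElem P) (hPsa : IsSelfAdjoint P)
    (hPran : Set.range ⇑P = Set.range ⇑L) :
    IsClosed (Set.range ⇑L) ∧
    (∀ i, Isometry (S i)) ∧
    (∀ i x, x ∈ Set.range ⇑L → ContinuousLinearMap.adjoint (S i) x ∈ Set.range ⇑L) ∧
    (∀ i (h : H), L (star (T i) h) = ContinuousLinearMap.adjoint (S i) (L h)) ∧
    (∀ i (h : H), L (T i h) = P (S i (L h))) := by
  classical
  have hstarcomm : ∀ i j : Fin n, Commute (star (T i)) (star (T j)) := by
    intro i j
    have h1 : star (T j * T i) = star (T i * T j) := by rw [hcomm j i]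
    show star (T i) * star (T j) = star (T j) * star (T i)
    simpa [star_mul] using h1
  -- injection and its properties
  have hinj : ∀ i : Fin n, Function.Injective
      (fun k : Fin n → ℕ => k + Pi.single i 1) := fun i => add_left_injective _
  have hsub : ∀ (i : Fin n) (k : Fin n → ℕ), k + Pi.single i 1 - Pi.single i 1 = k := by
    intro i k; funext j; simp
  have hne : ∀ (i : Fin n) (k : Fin n → ℕ), (k + Pi.single i 1 : Fin n → ℕ) i ≠ 0 := by
    intro i k; simp
  have hrange : ∀ (i : Fin n) (x : Fin n → ℕ), x i ≠ 0 →
      x ∈ Set.range (fun k : Fin n → ℕ => k + Pi.single i 1) := by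
    intro i x hx
    refine ⟨x - Pi.single i 1, ?_⟩
    funext j
    rcases eq_or_ne j i with rfl | hj
    · simp [Nat.sub_add_cancel (Nat.one_le_iff_ne_zero.mpr hx)]
    · simp [Pi.single_eq_of_ne hj]
  have hreindex : ∀ (i : Fin n) (f : (Fin n → ℕ) → ℂ), (∀ k, k i = 0 → f k = 0) →
      ∑' (k : Fin n → ℕ), f (k + Pi.single i 1) = ∑' k, f k := by
    intro i f hf
    refine (hinj i).tsum_eq ?_
    intro x hx
    exact hrange i x fun h0 => hx (hf x h0)
  -- shifted coordinate of L h
  have hkey : ∀ (i : Fin n) (g : H) (k : Fin n → ℕ),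
      (L g) (k + Pi.single i 1) = (L (star (T i) g)) k := by
    intro i g k
    rw [hL, hL]
    have h2 : (List.ofFn fun j => (star (T j)) ^ ((k + Pi.single i 1 : Fin n → ℕ) j)).prod
        = (List.ofFn fun j => (star (T j)) ^ (k j)).prod * star (T i) := by
      have hupdate : (fun j => (star (T j)) ^ ((k + Pi.single i 1 : Fin n → ℕ) j))
          = Function.update (fun j => (star (T j)) ^ (k j)) i
            ((star (T i)) ^ (k i) * star (T i)) := by
        funext j
        rcases eq_or_ne j i with rfl | hj
        · simp [pow_succ]
        · simp [Function.update_of_ne hj, Pi.single_eq_of_ne hj]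
      rw [hupdate, ofFn_prod_update']
      intro j
      exact (hstarcomm i j).pow_right _
    rw [h2]
    simp [ContinuousLinearMap.mul_apply]
  -- shifted coordinate of S i b
  have hSb : ∀ (i : Fin n) (b : lp (fun _ : Fin n → ℕ => H) 2) (k : Fin n → ℕ),
      (S i b) (k + Pi.single i 1) = b k := by
    intro i b k
    rw [hS, if_neg (hne i k), hsub]
  -- conjunct 4
  have hadj : ∀ (i : Fin n) (g : H),
      L (star (T i) g) = ContinuousLinearMap.adjoint (S i) (L g) := by
    intro i g
    refine ext_inner_right ℂ fun b => ?_
    rw [ContinuousLinearMap.adjoint_inner_left]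
    calc ⟪(L (star (T i) g) : lp (fun _ : Fin n → ℕ => H) 2), b⟫
        = ∑' k, ⟪(L (star (T i) g)) k, b k⟫ := lp.inner_eq_tsum _ _
      _ = ∑' k, ⟪(L g) (k + Pi.single i 1), (S i b) (k + Pi.single i 1)⟫ := by
          congr 1
          funext k
          exact congrArg₂ (fun x y : H => (inner ℂ x y : ℂ)) (hkey i g k).symm (hSb i b k).symm
      _ = ∑' k, ⟪(L g) k, (S i b) k⟫ := by
          refine hreindex i (fun k => (inner ℂ ((L g) k) ((S i b) k) : ℂ)) fun k hk => ?_
          show (inner ℂ ((L g) k) ((S i b) k) : ℂ) = 0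
          rw [hS i b k, if_pos hk, inner_zero_right]
      _ = ⟪(L g : lp (fun _ : Fin n → ℕ => H) 2), S i b⟫ := (lp.inner_eq_tsum _ _).symm
  -- conjunct 2
  have hiso : ∀ i, Isometry (S i) := by
    intro i
    refine AddMonoidHomClass.isometry_of_norm _ fun a => ?_
    have hinner : ⟪S i a, S i a⟫ = ⟪a, a⟫ := by
      rw [lp.inner_eq_tsum, lp.inner_eq_tsum]
      calc ∑' k, ⟪(S i a) k, (S i a) k⟫
          = ∑' k, ⟪(S i a) (k + Pi.single i 1), (S i a) (k + Pi.single i 1)⟫ := by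
            refine (hreindex i (fun k => (inner ℂ ((S i a) k) ((S i a) k) : ℂ)) fun k hk => ?_).symm
            show (inner ℂ ((S i a) k) ((S i a) k) : ℂ) = 0
            rw [hS i a k, if_pos hk, inner_zero_left]
        _ = ∑' k, ⟪a k, a k⟫ := by
            congr 1
            funext k
            exact congrArg₂ (fun x y : H => (inner ℂ x y : ℂ)) (hSb i a k) (hSb i a k)
    rw [norm_eq_sqrt_re_inner (𝕜 := ℂ), norm_eq_sqrt_re_inner (𝕜 := ℂ), hinner]
  refine ⟨L.isometry.isClosedEmbedding.isClosed_range, hiso, ?_, hadj, ?_⟩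
  · rintro i x ⟨g, rfl⟩
    exact ⟨star (T i) g, hadj i g⟩
  · intro i g
    have hPadj : ContinuousLinearMap.adjoint P = P :=
      ContinuousLinearMap.isSelfAdjoint_iff'.mp hPsa
    -- P fixes range L
    have hfix : ∀ x ∈ Set.range ⇑L, P x = x := by
      rintro x hx
      rw [← hPran] at hx
      obtain ⟨u, rfl⟩ := hx
      exact DFunLike.congr_fun hPidem u
    -- orthogonality
    have horth : ∀ y : H, ⟪S i (L g) - L (T i g), (L y : lp (fun _ : Fin n → ℕ => H) 2)⟫ = 0 := by
      intro y
      rw [inner_sub_left]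
      have h1 : ⟪S i (L g), (L y : lp (fun _ : Fin n → ℕ => H) 2)⟫ = ⟪T i g, y⟫ := by
        rw [← ContinuousLinearMap.adjoint_inner_right, ← hadj, L.inner_map_map,
          ContinuousLinearMap.star_eq_adjoint, ContinuousLinearMap.adjoint_inner_right]
      have h2 : ⟪(L (T i g) : lp (fun _ : Fin n → ℕ => H) 2), (L y : lp (fun _ : Fin n → ℕ => H) 2)⟫ = ⟪T i g, y⟫ :=
        L.inner_map_map _ _
      rw [h1, h2, sub_self]
    have hPz : P (S i (L g) - L (T i g)) = 0 := by
      have hz : ∀ w, ⟪P (S i (L g) - L (T i g)), w⟫ = 0 := by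
        intro w
        rw [← hPadj, ContinuousLinearMap.adjoint_inner_left]
        have : P w ∈ Set.range ⇑L := hPran ▸ Set.mem_range_self w
        obtain ⟨y, hy⟩ := this
        rw [← hy]
        exact horth y
      have := hz (P (S i (L g) - L (T i g)))
      exact inner_self_eq_zero.mp this
    have : P (S i (L g)) = P (L (T i g)) + P (S i (L g) - L (T i g)) := by
      rw [← map_add]; congr 1; abel
    rw [this, hPz, add_zero, hfix _ (Set.mem_range_self _)]
end

section
/- Let T = (T₁, …, Tₙ) be a doubly commuting pure tuple on H and L_T the dilation isometry. Then the minimality condition holds: the closed span of { S^k (L_T h) : k ∈ ℕⁿ, h ∈ H } equals all of ℓ²(ℕⁿ, D_{T*}). -/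
lemma ofFn_pow_mul_ofFn_pow {M : Type*} [Monoid M] :
    ∀ {n : ℕ} (A : Fin n → M), (∀ i j, Commute (A i) (A j)) →
      ∀ k l : Fin n → ℕ,
      (List.ofFn fun i => A i ^ k i).prod * (List.ofFn fun i => A i ^ l i).prod
        = (List.ofFn fun i => A i ^ (k i + l i)).prod := by
  intro n
  induction n with
  | zero => intro A hA k l; simp
  | succ m ih =>
    intro A hA k l
    have hc : Commute ((List.ofFn fun i : Fin m => A i.succ ^ k i.succ).prod) (A 0 ^ l 0) := by
      apply Commute.list_prod_left
      intro x hx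
      rw [List.mem_ofFn] at hx
      obtain ⟨i, rfl⟩ := hx
      exact (hA i.succ 0).pow_pow _ _
    simp only [List.ofFn_succ, List.prod_cons]
    rw [mul_assoc, ← mul_assoc _ (A 0 ^ l 0) _, hc.eq, mul_assoc (A 0 ^ l 0),
      ← mul_assoc (A 0 ^ k 0), ← pow_add, ih _ (fun i j => hA i.succ j.succ)]

set_option maxHeartbeats 2000000 in
/-- Minimality of the dilation of a doubly commuting pure tuple: the closed linear span of
`{ S^k (L_T h) : k ∈ ℕⁿ, h ∈ H }` is all of `ℓ²(ℕⁿ, D_{T*})` (i.e. of the codomain Hardy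
space carrying the values of `L_T`). -/
theorem stmt_14 {H : Type*} [NormedAddCommGroup H] [InnerProductSpace ℂ H] [CompleteSpace H]
    (n : ℕ) (T : Fin n → (H →L[ℂ] H))
    (hcontr : ∀ i, ‖T i‖ ≤ 1)
    (hcomm : ∀ i j, T i * T j = T j * T i)
    (hdc : ∀ i j, i ≠ j → T i * star (T j) = star (T j) * T i)
    (hpure : ∀ i (h : H),
      Filter.Tendsto (fun m : ℕ => ((star (T i)) ^ m) h) Filter.atTop (nhds 0))
    (D : Fin n → (H →L[ℂ] H))
    (hDpos : ∀ i, (D i).IsPositive) (hDsq : ∀ i, (D i) ^ 2 = 1 - T i * star (T i))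
    (E : Submodule ℂ H) (hE : E = ((LinearMap.range (((List.ofFn fun i => D i).prod :
      H →L[ℂ] H) : H →ₗ[ℂ] H)).topologicalClosure))
    (L : H →ₗᵢ[ℂ] lp (fun _ : Fin n → ℕ => E) 2)
    (hL : ∀ (h : H) (k : Fin n → ℕ),
      ((L h) k : H) = (List.ofFn fun i => D i).prod
        (((List.ofFn fun i => (star (T i)) ^ (k i)).prod) h))
    (S : Fin n → (lp (fun _ : Fin n → ℕ => E) 2 →L[ℂ] lp (fun _ : Fin n → ℕ => E) 2))
    (hS : ∀ i (a : lp (fun _ : Fin n → ℕ => E) 2) (k : Fin n → ℕ),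
      (S i a) k = if k i = 0 then 0 else a (k - Pi.single i 1)) :
    (Submodule.span ℂ {x : lp (fun _ : Fin n → ℕ => E) 2 |
      ∃ (k : Fin n → ℕ) (h : H),
        x = ((List.ofFn fun i => (S i) ^ (k i)).prod) (L h)}).topologicalClosure = ⊤ := by
  classical
  -- abbreviations
  set Dp : H →L[ℂ] H := (List.ofFn fun i => D i).prod with hDpdef
  set Tk : (Fin n → ℕ) → (H →L[ℂ] H) :=
    fun a => (List.ofFn fun i => (star (T i)) ^ (a i)).prod with hTkdef
  have hDE : ∀ x : H, Dp x ∈ E := by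
    intro x; rw [hE]
    exact Submodule.le_topologicalClosure _ (LinearMap.mem_range_self _ x)
  have hL' : ∀ (h : H) (k : Fin n → ℕ), ((L h) k : H) = Dp (Tk k h) := hL
  -- the adjoints commute
  have hstar : ∀ i j, Commute (star (T i)) (star (T j)) := by
    intro i j
    have h1 := congrArg star (hcomm i j)
    simp only [star_mul] at h1
    exact h1.symm
  have hTcomp : ∀ (a b : Fin n → ℕ) (x : H), Tk a (Tk b x) = Tk (a + b) x := by
    intro a b x
    have h2 : Tk (a + b) = (List.ofFn fun i => (star (T i)) ^ (a i + b i)).prod := rfl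
    rw [h2, ← ofFn_pow_mul_ofFn_pow _ hstar a b]
    rfl
  have hTk0 : ∀ x : H, Tk (0 : Fin n → ℕ) x = x := by
    intro x
    have : Tk (0 : Fin n → ℕ) = 1 := by
      rw [hTkdef]
      apply List.prod_eq_one
      intro y hy
      rw [List.mem_ofFn] at hy
      obtain ⟨i, rfl⟩ := hy
      simp
    rw [this]; rfl
  -- arithmetic helpers on ℕ-vectors
  have hle_single : ∀ (i : Fin n) (p : ℕ) (m : Fin n → ℕ),
      (Pi.single i p : Fin n → ℕ) ≤ m ↔ p ≤ m i := by
    intro i p m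
    constructor
    · intro h; simpa using Pi.le_def.mp h i
    · intro h
      rw [Pi.le_def]
      intro j
      rcases eq_or_ne j i with rfl | hj
      · simpa using h
      · simp [Pi.single_apply, hj]
  have hsplit : ∀ (a b m : Fin n → ℕ), a + b ≤ m ↔ (a ≤ m ∧ b ≤ m - a) := by
    intro a b m
    simp only [Pi.le_def, Pi.add_apply, Pi.sub_apply]
    constructor
    · intro h
      exact ⟨fun j => by have := h j; omega, fun j => by have := h j; omega⟩
    · rintro ⟨h1, h2⟩ j
      have := h1 j; have := h2 j; omega
  have hsub2 : ∀ (a b m : Fin n → ℕ), m - a - b = m - (a + b) := by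
    intro a b m; funext j; simp only [Pi.sub_apply, Pi.add_apply]; omega
  -- coordinates of powers of the shifts
  have hSpow : ∀ (i : Fin n) (p : ℕ) (a : lp (fun _ : Fin n → ℕ => E) 2) (m : Fin n → ℕ),
      ((S i ^ p) a) m = if p ≤ m i then a (m - Pi.single i p) else 0 := by
    intro i p
    induction p with
    | zero => intro a m; simp
    | succ q ih =>
      intro a m
      rw [pow_succ, ContinuousLinearMap.mul_apply, ih]
      by_cases hq : q ≤ m i
      · rw [if_pos hq, hS]
        have hmi : ((m - Pi.single i q : Fin n → ℕ)) i = m i - q := by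
          simp [Pi.sub_apply]
        by_cases h1 : q + 1 ≤ m i
        · rw [if_neg (by rw [hmi]; omega), if_pos h1]
          have harg : (m - Pi.single i q - Pi.single i 1 : Fin n → ℕ)
              = m - Pi.single i (q + 1) := by
            funext j
            rcases eq_or_ne j i with rfl | hj
            · simp only [Pi.sub_apply, Pi.single_eq_same]; omega
            · simp only [Pi.sub_apply, Pi.single_apply, if_neg hj]; omega
          rw [harg]
        · rw [if_pos (by omega), if_neg h1]
      · rw [if_neg hq, if_neg (by omega)]
  have hSlist : ∀ (l : List (Fin n)) (k : Fin n → ℕ) (a : lp (fun _ : Fin n → ℕ => E) 2)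
      (m : Fin n → ℕ),
      (((l.map fun i => (S i) ^ (k i)).prod) a) m
        = if (l.map fun i => (Pi.single i (k i) : Fin n → ℕ)).sum ≤ m
          then a (m - (l.map fun i => (Pi.single i (k i) : Fin n → ℕ)).sum) else 0 := by
    intro l k
    induction l with
    | nil => intro a m; simp
    | cons i t ih =>
      intro a m
      simp only [List.map_cons, List.prod_cons, List.sum_cons, ContinuousLinearMap.mul_apply]
      rw [hSpow, ih]
      set c : Fin n → ℕ := (t.map fun j => (Pi.single j (k j) : Fin n → ℕ)).sum with hc
      by_cases h1 : k i ≤ m i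
      · by_cases h2 : c ≤ m - Pi.single i (k i)
        · rw [if_pos h1, if_pos h2,
            if_pos ((hsplit _ _ _).mpr ⟨(hle_single _ _ _).mpr h1, h2⟩), hsub2]
        · rw [if_pos h1, if_neg h2, if_neg]
          intro hcon
          exact h2 ((hsplit _ _ _).mp hcon).2
      · rw [if_neg h1, if_neg]
        intro hcon
        exact h1 ((hle_single _ _ _).mp ((hsplit _ _ _).mp hcon).1)
  have hSprod : ∀ (k : Fin n → ℕ) (a : lp (fun _ : Fin n → ℕ => E) 2) (m : Fin n → ℕ),
      (((List.ofFn fun i => (S i) ^ (k i)).prod) a) m = if k ≤ m then a (m - k) else 0 := by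
    intro k a m
    rw [List.ofFn_eq_map, hSlist]
    rw [← List.ofFn_eq_map, List.sum_ofFn, Finset.univ_sum_single]
  -- the key membership
  have key : ∀ (k : Fin n → ℕ) (h : H),
      (lp.single 2 k (⟨Dp h, hDE h⟩ : E)) ∈ Submodule.span ℂ
        {x : lp (fun _ : Fin n → ℕ => E) 2 | ∃ (k : Fin n → ℕ) (h : H),
          x = ((List.ofFn fun i => (S i) ^ (k i)).prod) (L h)} := by
    intro k h
    set u : Finset (Fin n) → (Fin n → ℕ) := fun s i => if i ∈ s then 1 else 0 with hu
    have hcoordval : ∀ (s : Finset (Fin n)) (m : Fin n → ℕ),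
        ((((List.ofFn fun i => (S i) ^ ((k + u s) i)).prod) (L (Tk (u s) h)) m : E) : H)
          = if k + u s ≤ m then Dp (Tk (m - k) h) else 0 := by
      intro s m
      rw [hSprod]
      by_cases hc : k + u s ≤ m
      · rw [if_pos hc, if_pos hc, hL', hTcomp]
        have : (m - (k + u s)) + u s = m - k := by
          funext j
          have h1 := Pi.le_def.mp hc j
          simp only [Pi.add_apply, Pi.sub_apply] at h1 ⊢
          omega
        rw [this]
      · rw [if_neg hc, if_neg hc]
        simp
    have hz : (∑ s : Finset (Fin n), ((-1:ℂ)^s.card) •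
        ((List.ofFn fun i => (S i) ^ ((k + u s) i)).prod) (L (Tk (u s) h)))
        = lp.single 2 k (⟨Dp h, hDE h⟩ : E) := by
      apply lp.ext
      funext m
      apply Subtype.ext
      have hRHS : ((lp.single (E := fun _ : Fin n → ℕ => E) 2 k
          (⟨Dp h, hDE h⟩ : E)) m : H) = if m = k then Dp h else 0 := by
        by_cases hmk : m = k
        · subst hmk
          rw [lp.single_apply_self, if_pos rfl]
        · rw [lp.single_apply_ne _ _ _ hmk, if_neg hmk, ZeroMemClass.coe_zero]
      rw [lp.coeFn_sum, Finset.sum_apply, AddSubmonoidClass.coe_finset_sum, hRHS]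
      have hterm : ∀ s : Finset (Fin n),
          (((((-1:ℂ)^s.card) • ((List.ofFn fun i => (S i) ^ ((k + u s) i)).prod)
              (L (Tk (u s) h))) m : E) : H)
            = (-1:ℂ)^s.card • (if k + u s ≤ m then Dp (Tk (m - k) h) else 0) := by
        intro s
        rw [lp.coeFn_smul, Pi.smul_apply, Submodule.coe_smul, hcoordval]
      rw [Finset.sum_congr rfl fun s _ => hterm s]
      by_cases hmk : m = k
      · subst hmk
        rw [if_pos rfl, Finset.sum_eq_single_of_mem (∅ : Finset (Fin n)) (Finset.mem_univ _)]
        · have h0 : m + u ∅ ≤ m := Pi.le_def.mpr fun j => by simp [hu]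
          have hm0 : m - m = (0 : Fin n → ℕ) := by funext j; simp
          rw [if_pos h0, hm0, hTk0]
          simp
        · intro s _ hs
          obtain ⟨i, hi⟩ := Finset.nonempty_iff_ne_empty.mpr hs
          have hcon : ¬ (m + u s ≤ m) := by
            intro hcon
            have h5 := Pi.le_def.mp hcon i
            have h6 : u s i = 1 := by simp [hu, hi]
            rw [Pi.add_apply, h6] at h5
            omega
          rw [if_neg hcon, smul_zero]
      · rw [if_neg hmk]
        by_cases hkm : k ≤ m
        · set uset : Finset (Fin n) := Finset.univ.filter (fun i => (m - k) i ≠ 0) with huset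
          have hcond : ∀ s : Finset (Fin n), (k + u s ≤ m) ↔ s ⊆ uset := by
            intro s
            constructor
            · intro hh j hj
              have h5 := Pi.le_def.mp hh j
              have h6 : u s j = 1 := by simp [hu, hj]
              rw [Pi.add_apply, h6] at h5
              simp only [huset, Finset.mem_filter, Finset.mem_univ, true_and, Pi.sub_apply]
              omega
            · intro hss
              rw [Pi.le_def]
              intro j
              have hk := Pi.le_def.mp hkm j
              rw [Pi.add_apply]
              by_cases hj : j ∈ s
              · have h3 := hss hj
                simp only [huset, Finset.mem_filter, Finset.mem_univ, true_and,
                  Pi.sub_apply] at h3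
                have h6 : u s j = 1 := by simp [hu, hj]
                rw [h6]
                omega
              · have h6 : u s j = 0 := by simp [hu, hj]
                rw [h6]
                omega
          have hne : uset ≠ ∅ := by
            have hex : ∃ j, m j ≠ k j := by
              by_contra hcon
              push_neg at hcon
              exact hmk (funext hcon)
            obtain ⟨j, hj⟩ := hex
            have hk := Pi.le_def.mp hkm j
            intro hcon
            have hmem : j ∈ uset := by
              simp only [huset, Finset.mem_filter, Finset.mem_univ, true_and, Pi.sub_apply]
              omega
            rw [hcon] at hmem
            exact absurd hmem (Finset.notMem_empty j)
          have hstep : ∀ s : Finset (Fin n),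
              ((-1:ℂ)^s.card • (if k + u s ≤ m then Dp (Tk (m - k) h) else 0))
                = if s ∈ uset.powerset then (-1:ℂ)^s.card • Dp (Tk (m - k) h) else 0 := by
            intro s
            by_cases hsub : s ⊆ uset
            · have h7 : k + u s ≤ m := (hcond s).mpr hsub
              have h9 : s ∈ uset.powerset := Finset.mem_powerset.mpr hsub
              simp only [h7, h9, if_true]
            · have h8 : ¬ (k + u s ≤ m) := fun hh => hsub ((hcond s).mp hh)
              have h9 : s ∉ uset.powerset := fun hh => hsub (Finset.mem_powerset.mp hh)
              simp only [h8, h9, if_false, smul_zero]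
          rw [Finset.sum_congr rfl fun s _ => hstep s, Finset.sum_ite_mem,
            Finset.univ_inter, ← Finset.sum_smul]
          have hcard : (∑ s ∈ uset.powerset, (-1:ℂ)^s.card) = 0 := by
            have h1 := Finset.sum_powerset_neg_one_pow_card (α := Fin n) (x := uset)
            rw [if_neg hne] at h1
            have h2 : (∑ s ∈ uset.powerset, (-1:ℂ)^s.card)
                = ((∑ s ∈ uset.powerset, (-1:ℤ)^s.card : ℤ) : ℂ) := by
              push_cast
              rfl
            rw [h2, h1, Int.cast_zero]
          rw [hcard, zero_smul]
        · have hall0 : ∀ s : Finset (Fin n),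
              ((-1:ℂ)^s.card • (if k + u s ≤ m then Dp (Tk (m - k) h) else 0)) = 0 := by
            intro s
            have h8 : ¬ (k + u s ≤ m) := fun hh => hkm ((hsplit _ _ _).mp hh).1
            simp only [h8, if_false, smul_zero]
          rw [Finset.sum_congr rfl fun s _ => hall0 s, Finset.sum_const, smul_zero]
    rw [← hz]
    exact Submodule.sum_mem _ fun s _ => Submodule.smul_mem _ _
      (Submodule.subset_span ⟨k + u s, Tk (u s) h, rfl⟩)
  -- pass to the closure
  set K := (Submodule.span ℂ {x : lp (fun _ : Fin n → ℕ => E) 2 |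
      ∃ (k : Fin n → ℕ) (h : H),
        x = ((List.ofFn fun i => (S i) ^ (k i)).prod) (L h)}).topologicalClosure with hK
  have hKclosed : IsClosed (K : Set (lp (fun _ : Fin n → ℕ => E) 2)) :=
    Submodule.isClosed_topologicalClosure _
  have hsadd : ∀ (kk : Fin n → ℕ) (a b : E),
      lp.single (E := fun _ : Fin n → ℕ => E) 2 kk (a - b)
        = lp.single 2 kk a - lp.single 2 kk b := by
    intro kk a b
    apply lp.ext
    funext m
    rw [lp.coeFn_sub, Pi.sub_apply]
    by_cases hm : m = kk
    · subst hm; simp [lp.single_apply_self]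
    · simp [lp.single_apply_ne _ _ _ hm]
  have hsingleK : ∀ (kk : Fin n → ℕ) (v : E), lp.single 2 kk v ∈ K := by
    intro kk v
    have hv : (v : H) ∈ closure ((LinearMap.range ((Dp : H →ₗ[ℂ] H)) : Submodule ℂ H)
        : Set H) := by
      have h2 : (v : H) ∈ (LinearMap.range ((Dp : H →ₗ[ℂ] H))).topologicalClosure := by
        rw [← hE]; exact v.2
      have h3 : (((LinearMap.range ((Dp : H →ₗ[ℂ] H))).topologicalClosure : Submodule ℂ H)
          : Set H) = closure ((LinearMap.range ((Dp : H →ₗ[ℂ] H)) : Submodule ℂ H) : Set H) :=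
        Submodule.topologicalClosure_coe _
      rw [← h3]
      exact h2
    rw [mem_closure_iff_seq_limit] at hv
    obtain ⟨g, hg, hglim⟩ := hv
    choose x hx using fun j => LinearMap.mem_range.mp (hg j)
    have hmem : ∀ j, lp.single (E := fun _ : Fin n → ℕ => E) 2 kk
        (⟨Dp (x j), hDE _⟩ : E) ∈ K :=
      fun j => Submodule.le_topologicalClosure _ (key kk (x j))
    have hnorm : ∀ j, ‖lp.single (E := fun _ : Fin n → ℕ => E) 2 kk
        (⟨Dp (x j), hDE _⟩ : E) - lp.single 2 kk v‖ = ‖g j - (v : H)‖ := by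
      intro j
      rw [← hsadd]
      have h4 := lp.norm_single (E := fun _ : Fin n → ℕ => E) (p := 2)
        (by norm_num) kk ((⟨Dp (x j), hDE _⟩ : E) - v)
      rw [h4, ← hx j]
      rfl
    have htend : Filter.Tendsto (fun j => lp.single (E := fun _ : Fin n → ℕ => E) 2 kk
        (⟨Dp (x j), hDE _⟩ : E)) Filter.atTop (nhds (lp.single 2 kk v)) := by
      rw [tendsto_iff_norm_sub_tendsto_zero]
      have h5 : Filter.Tendsto (fun j => ‖g j - (v : H)‖) Filter.atTop (nhds 0) := by
        have := (tendsto_sub_nhds_zero_iff.mpr hglim).norm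
        simpa using this
      refine h5.congr fun j => ?_
      rw [hnorm j]
    exact hKclosed.mem_of_tendsto htend (Filter.Eventually.of_forall hmem)
  refine Submodule.eq_top_iff'.mpr fun f => ?_
  have hsum := lp.hasSum_single (E := fun _ : Fin n → ℕ => E) (p := 2)
    ENNReal.ofNat_ne_top f
  exact hKclosed.mem_of_tendsto hsum (Filter.Eventually.of_forall fun s =>
    Submodule.sum_mem _ fun m _ => hsingleK m (f m))
end

section
/- Let E be a Hilbert space and Q a closed subspace of ℓ²(ℕⁿ, E) that is invariant under all shifts Sᵢ and all adjoints Sᵢ* (i.e., jointly reducing). Then Q = ℓ²(ℕⁿ, F) for some closed subspace F ⊆ E, i.e., Q consists of all sequences with values in F. -/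
open scoped InnerProductSpace

section Aux

variable {E : Type*} [NormedAddCommGroup E] [InnerProductSpace ℂ E] {n : ℕ}

/-- application of `lp.single` for a constant family -/
lemma lp_single_apply' (k m : Fin n → ℕ) (e : E) :
    (lp.single (E := fun _ : Fin n → ℕ => E) 2 k e : ∀ _ : Fin n → ℕ, E) m =
      if m = k then e else 0 := by
  by_cases h : m = k
  · subst h; rw [if_pos rfl]; exact lp.single_apply_self _ _ _
  · rw [if_neg h]; exact lp.single_apply_ne _ _ _ h

lemma pi_sub_add_single (k : Fin n → ℕ) (i : Fin n) (hi : k i ≠ 0) :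
    (k - Pi.single i 1) + Pi.single i 1 = k := by
  funext j
  simp only [Pi.add_apply, Pi.sub_apply]
  by_cases h : j = i
  · subst h; simp only [Pi.single_eq_same]; omega
  · simp [Pi.single_eq_of_ne h]

lemma sum_sub_single (k : Fin n → ℕ) (i : Fin n) (hi : k i ≠ 0) {N : ℕ}
    (hk : ∑ j : Fin n, k j = N + 1) : ∑ j : Fin n, (k - Pi.single i 1 : Fin n → ℕ) j = N := by
  have h1 : ∀ j : Fin n, (k - Pi.single i 1 : Fin n → ℕ) j + (Pi.single i 1 : Fin n → ℕ) j = k j := by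
    intro j
    by_cases h : j = i
    · subst h; simp only [Pi.sub_apply, Pi.single_eq_same]; omega
    · simp [Pi.single_eq_of_ne h]
  have h2 : ∑ j : Fin n, ((k - Pi.single i 1 : Fin n → ℕ) j + (Pi.single i 1 : Fin n → ℕ) j) = ∑ j : Fin n, k j :=
    Finset.sum_congr rfl fun j _ => h1 j
  rw [Finset.sum_add_distrib] at h2
  have h3 : ∑ j : Fin n, (Pi.single i 1 : Fin n → ℕ) j = 1 := by
    classical
    rw [Finset.sum_pi_single']
    simp
  omega

end Aux

set_option maxHeartbeats 1000000 in
/-- A closed subspace `Q ⊆ ℓ²(ℕⁿ, E)` that is invariant under all coordinate shifts `Sᵢ`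
and all their adjoints (i.e. jointly reducing) is of the form `ℓ²(ℕⁿ, F)` for some closed
subspace `F ⊆ E`. -/
theorem stmt_16 {E : Type*} [NormedAddCommGroup E] [InnerProductSpace ℂ E] [CompleteSpace E]
    (n : ℕ)
    (S : Fin n → (lp (fun _ : Fin n → ℕ => E) 2 →L[ℂ] lp (fun _ : Fin n → ℕ => E) 2))
    (hS : ∀ i (a : lp (fun _ : Fin n → ℕ => E) 2) (k : Fin n → ℕ),
      (S i a) k = if k i = 0 then 0 else a (k - Pi.single i 1))
    (Q : Submodule ℂ (lp (fun _ : Fin n → ℕ => E) 2))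
    (hQclosed : IsClosed (Q : Set (lp (fun _ : Fin n → ℕ => E) 2)))
    (hQinv : ∀ i, ∀ x ∈ Q, S i x ∈ Q)
    (hQinv' : ∀ i, ∀ x ∈ Q, ContinuousLinearMap.adjoint (S i) x ∈ Q) :
    ∃ F : Submodule ℂ E, IsClosed (F : Set E) ∧
      (Q : Set (lp (fun _ : Fin n → ℕ => E) 2)) =
        {a : lp (fun _ : Fin n → ℕ => E) 2 | ∀ k, a k ∈ F} := by
  classical
  -- S on "delta" elements
  have hS_single : ∀ (i : Fin n) (k : Fin n → ℕ) (e : E),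
      S i (lp.single 2 k e) = lp.single 2 (k + Pi.single i 1) e := by
    intro i k e
    apply lp.ext
    funext m
    rw [hS]
    by_cases h : m i = 0
    · rw [if_pos h]
      have hne : ¬ m = k + Pi.single i 1 := by
        intro hm
        apply absurd h
        rw [hm]
        simp
      rw [lp_single_apply', if_neg hne]
    · rw [if_neg h, lp_single_apply', lp_single_apply']
      have key : m - Pi.single i 1 = k ↔ m = k + Pi.single i 1 := by
        constructor
        · intro hmk
          rw [← hmk, pi_sub_add_single m i h]
        · intro hm
          subst hm
          funext j
          by_cases hj : j = i
          · subst hj; simp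
          · simp [Pi.single_eq_of_ne hj]
      by_cases hmk : m - Pi.single i 1 = k
      · rw [if_pos hmk, if_pos (key.mp hmk)]
      · rw [if_neg hmk, if_neg fun hc => hmk (key.mpr hc)]
  -- adjoint coordinate formula
  have hSadj : ∀ (i : Fin n) (a : lp (fun _ : Fin n → ℕ => E) 2) (k : Fin n → ℕ),
      (ContinuousLinearMap.adjoint (S i) a) k = a (k + Pi.single i 1) := by
    intro i a k
    apply ext_inner_right ℂ
    intro e
    calc ⟪(ContinuousLinearMap.adjoint (S i) a) k, e⟫_ℂ
        = ⟪ContinuousLinearMap.adjoint (S i) a, lp.single 2 k e⟫_ℂ := by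
          rw [lp.inner_single_right]
      _ = ⟪a, S i (lp.single 2 k e)⟫_ℂ :=
          ContinuousLinearMap.adjoint_inner_left (S i) _ _
      _ = ⟪a, lp.single 2 (k + Pi.single i 1) e⟫_ℂ := by rw [hS_single]
      _ = ⟪a (k + Pi.single i 1), e⟫_ℂ := by rw [lp.inner_single_right]
  -- downshift lemma
  have hdown : ∀ (N : ℕ) (k : Fin n → ℕ), (∑ j, k j) = N →
      ∀ a ∈ Q, ∃ b ∈ Q, ∀ m, (b : ∀ _ : Fin n → ℕ, E) m = a (m + k) := by
    intro N
    induction N with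
    | zero =>
      intro k hk a ha
      have hk0 : k = 0 := by
        funext j
        have := Finset.sum_eq_zero_iff.mp hk j (Finset.mem_univ j)
        simpa using this
      exact ⟨a, ha, fun m => by rw [hk0]; simp⟩
    | succ N ih =>
      intro k hk a ha
      have hex : ∃ i, k i ≠ 0 := by
        by_contra hc
        push_neg at hc
        have : ∑ j, k j = 0 := Finset.sum_eq_zero fun j _ => hc j
        omega
      obtain ⟨i, hi⟩ := hex
      have hc : ContinuousLinearMap.adjoint (S i) a ∈ Q := hQinv' i a ha
      obtain ⟨b, hbQ, hb⟩ := ih (k - Pi.single i 1) (sum_sub_single k i hi hk) _ hc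
      refine ⟨b, hbQ, fun m => ?_⟩
      rw [hb m, hSadj]
      congr 1
      rw [add_assoc, pi_sub_add_single k i hi]
  -- upshift lemma
  have hup : ∀ (N : ℕ) (k : Fin n → ℕ), (∑ j, k j) = N →
      ∀ e : E, lp.single 2 0 e ∈ Q → lp.single 2 k e ∈ Q := by
    intro N
    induction N with
    | zero =>
      intro k hk e he
      have hk0 : k = 0 := by
        funext j
        have := Finset.sum_eq_zero_iff.mp hk j (Finset.mem_univ j)
        simpa using this
      rw [hk0]; exact he
    | succ N ih =>
      intro k hk e he
      have hex : ∃ i, k i ≠ 0 := by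
        by_contra hc
        push_neg at hc
        have : ∑ j, k j = 0 := Finset.sum_eq_zero fun j _ => hc j
        omega
      obtain ⟨i, hi⟩ := hex
      have h1 : lp.single 2 (k - Pi.single i 1) e ∈ Q :=
        ih (k - Pi.single i 1) (sum_sub_single k i hi hk) e he
      have h2 := hQinv i _ h1
      rw [hS_single, pi_sub_add_single k i hi] at h2
      exact h2
  -- cutting lemma (iterated vacuum projection)
  have hcut : ∀ (l : List (Fin n)), ∀ a ∈ Q, ∃ b ∈ Q,
      ∀ m, (b : ∀ _ : Fin n → ℕ, E) m = if ∀ i ∈ l, m i = 0 then a m else 0 := by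
    intro l
    induction l with
    | nil => intro a ha; exact ⟨a, ha, fun m => by simp⟩
    | cons i l ih =>
      intro a ha
      obtain ⟨b, hbQ, hb⟩ := ih a ha
      refine ⟨b - S i (ContinuousLinearMap.adjoint (S i) b),
        sub_mem hbQ (hQinv i _ (hQinv' i b hbQ)), fun m => ?_⟩
      have hcoe : ((b - S i (ContinuousLinearMap.adjoint (S i) b) :
          lp (fun _ : Fin n → ℕ => E) 2) : ∀ _ : Fin n → ℕ, E) m
          = b m - (S i (ContinuousLinearMap.adjoint (S i) b)) m := rfl
      rw [hcoe, hS]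
      by_cases h : m i = 0
      · rw [if_pos h, sub_zero, hb m]
        by_cases h2 : ∀ j ∈ l, m j = 0
        · rw [if_pos h2, if_pos]
          intro j hj
          rcases List.mem_cons.mp hj with hj | hj
          · rw [hj]; exact h
          · exact h2 j hj
        · rw [if_neg h2, if_neg]
          intro hc
          exact h2 fun j hj => hc j (List.mem_cons_of_mem i hj)
      · rw [if_neg h, hSadj, pi_sub_add_single m i h, hb m, sub_self]
        rw [if_neg]
        intro hc
        exact h (hc i List.mem_cons_self)
  have hvac : ∀ a ∈ Q, lp.single 2 (0 : Fin n → ℕ) (a 0) ∈ Q := by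
    intro a ha
    obtain ⟨b, hbQ, hb⟩ := hcut (List.finRange n) a ha
    have hbe : b = lp.single 2 (0 : Fin n → ℕ) (a 0) := by
      apply lp.ext
      funext m
      rw [hb m, lp_single_apply']
      by_cases h : m = 0
      · subst h
        rw [if_pos (by intro i _; rfl), if_pos rfl]
      · rw [if_neg h, if_neg]
        intro hc
        exact h (funext fun i => hc i (List.mem_finRange i))
    rw [← hbe]; exact hbQ
  -- the single-insertion linear map
  let L : E →ₗ[ℂ] lp (fun _ : Fin n → ℕ => E) 2 :=
    { toFun := fun e => lp.single 2 (0 : Fin n → ℕ) e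
      map_add' := fun x y => by
        apply lp.ext
        funext m
        have h1 : ((lp.single 2 (0 : Fin n → ℕ) (x + y) :
            lp (fun _ : Fin n → ℕ => E) 2) : ∀ _ : Fin n → ℕ, E) m = _ := lp_single_apply' 0 m (x + y)
        rw [h1]
        have h2 : ((lp.single 2 (0 : Fin n → ℕ) x + lp.single 2 (0 : Fin n → ℕ) y :
            lp (fun _ : Fin n → ℕ => E) 2) : ∀ _ : Fin n → ℕ, E) m
            = (lp.single 2 (0 : Fin n → ℕ) x : lp (fun _ : Fin n → ℕ => E) 2) m
              + (lp.single 2 (0 : Fin n → ℕ) y : lp (fun _ : Fin n → ℕ => E) 2) m := rfl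
        rw [h2, lp_single_apply', lp_single_apply']
        by_cases h : m = 0 <;> simp [h]
      map_smul' := fun c x => by
        simpa using lp.single_smul (E := fun _ : Fin n → ℕ => E) 2 (0 : Fin n → ℕ) x c }
  have hLiso : Isometry L := by
    apply AddMonoidHomClass.isometry_of_norm
    intro x
    have := lp.norm_single (E := fun _ : Fin n → ℕ => E) (p := 2) (by norm_num)
      (0 : Fin n → ℕ) x
    simpa [L] using this
  refine ⟨Q.comap L, hQclosed.preimage hLiso.continuous, ?_⟩
  ext a
  simp only [SetLike.mem_coe, Set.mem_setOf_eq, Submodule.mem_comap]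
  constructor
  · intro ha k
    obtain ⟨b, hbQ, hb⟩ := hdown (∑ j, k j) k rfl a ha
    have h0 : (b : ∀ _ : Fin n → ℕ, E) 0 = a k := by rw [hb 0, zero_add]
    have := hvac b hbQ
    rw [h0] at this
    exact this
  · intro ha
    have hsum : HasSum (fun k : Fin n → ℕ => lp.single 2 k (a k)) a :=
      lp.hasSum_single ENNReal.ofNat_ne_top a
    have hmem : ∀ s : Finset (Fin n → ℕ), ∑ k ∈ s, lp.single 2 k (a k) ∈ Q := by
      intro s
      apply Submodule.sum_mem
      intro k _
      exact hup (∑ j, k j) k rfl (a k) (ha k)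
    exact hQclosed.mem_of_tendsto hsum (Filter.Eventually.of_forall hmem)
end

section
/- Let Q be a closed proper subspace of H²(𝔻ⁿ) ≅ ℓ²(ℕⁿ, ℂ) invariant under all Sᵢ*, and set C_i = P_Q Sᵢ|_Q. If the tuple (C₁, …, Cₙ) is doubly commuting (CᵢCⱼ* = Cⱼ*Cᵢ for i ≠ j), then the defect operator D_{C*} = ∏ᵢ(I - CᵢCᵢ*)^{1/2} has rank at most one; indeed D_{C*}² = P_Q P_ℂ|_Q where P_ℂ is the projection onto constants. -/
open ContinuousLinearMap
open scoped InnerProductSpace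

namespace Stmt17Aux

variable {n : ℕ}
variable (S : Fin n → (lp (fun _ : Fin n → ℕ => ℂ) 2 →L[ℂ] lp (fun _ : Fin n → ℕ => ℂ) 2))
variable (hS : ∀ i (a : lp (fun _ : Fin n → ℕ => ℂ) 2) (k : Fin n → ℕ),
      (S i a) k = if k i = 0 then 0 else a (k - Pi.single i 1))
variable (Q : Submodule ℂ (lp (fun _ : Fin n → ℕ => ℂ) 2)) [CompleteSpace Q]
variable (hQinv : ∀ i, ∀ x ∈ Q, ContinuousLinearMap.adjoint (S i) x ∈ Q)
variable (C : Fin n → (Q →L[ℂ] Q))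
variable (hC : ∀ i, C i = (Q.orthogonalProjectionOnto).comp ((S i).comp (Q.subtypeL)))
variable (hdc : ∀ i j, i ≠ j → C i * star (C j) = star (C j) * C i)

lemma lem_eval (f : lp (fun _ : Fin n → ℕ => ℂ) 2) (k : Fin n → ℕ) :
    f k = ⟪(lp.single 2 k (1:ℂ) : lp (fun _ : Fin n → ℕ => ℂ) 2), f⟫_ℂ := by
  rw [lp.inner_single_left]
  simp [RCLike.inner_apply]

include hS

lemma lem_single (i : Fin n) (k : Fin n → ℕ) :
    S i (lp.single 2 k (1:ℂ)) = lp.single 2 (k + Pi.single i 1) (1:ℂ) := by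
  apply lp.ext
  funext m
  rw [hS]
  rcases eq_or_ne m (k + Pi.single i 1) with rfl | hne
  · rw [lp.single_apply_self]
    have h1 : ((k + Pi.single i 1 : Fin n → ℕ)) i ≠ 0 := by simp [Pi.single_apply]
    rw [if_neg h1]
    have h2 : ((k + Pi.single i 1 : Fin n → ℕ)) - Pi.single i 1 = k := by
      funext l; simp [Pi.single_apply]
    rw [h2, lp.single_apply_self]
  · rw [lp.single_apply_ne _ _ _ hne]
    by_cases h0 : m i = 0
    · rw [if_pos h0]
    · rw [if_neg h0]
      apply lp.single_apply_ne
      intro hc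
      apply hne
      funext l
      have := congrFun hc l
      simp only [Pi.sub_apply, Pi.add_apply, Pi.single_apply] at this ⊢
      by_cases hl : l = i
      · subst hl; simp at this ⊢; omega
      · simp [hl] at this ⊢; omega

lemma lem_adj (i : Fin n) (a : lp (fun _ : Fin n → ℕ => ℂ) 2) (k : Fin n → ℕ) :
    (ContinuousLinearMap.adjoint (S i) a) k = a (k + Pi.single i 1) := by
  rw [lem_eval (ContinuousLinearMap.adjoint (S i) a) k, adjoint_inner_right,
    lem_single S hS, ← lem_eval]

lemma lem_SS (i : Fin n) (a : lp (fun _ : Fin n → ℕ => ℂ) 2) (k : Fin n → ℕ) :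
    (S i (ContinuousLinearMap.adjoint (S i) a)) k = if k i = 0 then 0 else a k := by
  rw [hS]
  by_cases h0 : k i = 0
  · rw [if_pos h0, if_pos h0]
  · rw [if_neg h0, if_neg h0, lem_adj S hS]
    have harg : k - Pi.single i 1 + Pi.single i 1 = k := by
      funext l
      simp only [Pi.add_apply, Pi.sub_apply, Pi.single_apply]
      by_cases hl : l = i
      · subst hl; simp; omega
      · simp [hl]
    rw [harg]

lemma lem_E (i : Fin n) (a : lp (fun _ : Fin n → ℕ => ℂ) 2) (k : Fin n → ℕ) :
    ((1 - S i * ContinuousLinearMap.adjoint (S i)) a) k = if k i = 0 then a k else 0 := by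
  rw [ContinuousLinearMap.sub_apply, one_apply_eq_self, mul_apply_eq_comp]
  rw [lp.coeFn_sub]
  rw [Pi.sub_apply]
  rw [lem_SS S hS]
  by_cases h0 : k i = 0 <;> simp [h0]

lemma lem_comm (i j : Fin n) (hij : i ≠ j) (a : lp (fun _ : Fin n → ℕ => ℂ) 2) :
    ContinuousLinearMap.adjoint (S i) (S j a) = S j (ContinuousLinearMap.adjoint (S i) a) := by
  apply lp.ext
  funext k
  rw [lem_adj S hS, hS, hS, lem_adj S hS]
  have hj : ((k + Pi.single i 1 : Fin n → ℕ)) j = k j := by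
    simp [Pi.single_apply, Ne.symm hij]
  rw [hj]
  by_cases h0 : k j = 0
  · rw [if_pos h0, if_pos h0]
  · rw [if_neg h0, if_neg h0]
    have harg : k + Pi.single i 1 - Pi.single j 1 = k - Pi.single j 1 + Pi.single i 1 := by
      funext l
      simp only [Pi.add_apply, Pi.sub_apply, Pi.single_apply]
      by_cases hl : l = i
      · subst hl; simp [hij]
      · by_cases hlj : l = j <;> simp [hl, hlj] <;> omega
    rw [harg]

lemma lem_commE (i j : Fin n) (hij : i ≠ j) (a : lp (fun _ : Fin n → ℕ => ℂ) 2) :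
    ContinuousLinearMap.adjoint (S i) ((1 - S j * ContinuousLinearMap.adjoint (S j)) a)
      = (1 - S j * ContinuousLinearMap.adjoint (S j)) (ContinuousLinearMap.adjoint (S i) a) := by
  apply lp.ext
  funext k
  rw [lem_adj S hS, lem_E S hS, lem_E S hS]
  have hj : ((k + Pi.single i 1 : Fin n → ℕ)) j = k j := by
    simp [Pi.single_apply, Ne.symm hij]
  rw [hj]
  by_cases h0 : k j = 0
  · rw [if_pos h0, if_pos h0, lem_adj S hS]
  · rw [if_neg h0, if_neg h0]

lemma lem_commEL (j : Fin n) :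
    ∀ L : List (Fin n), j ∉ L → ∀ a : lp (fun _ : Fin n → ℕ => ℂ) 2,
      ContinuousLinearMap.adjoint (S j)
        ((L.map (fun l => 1 - S l * ContinuousLinearMap.adjoint (S l))).prod a)
      = (L.map (fun l => 1 - S l * ContinuousLinearMap.adjoint (S l))).prod
          (ContinuousLinearMap.adjoint (S j) a) := by
  intro L
  induction L with
  | nil => intro _ a; simp
  | cons l L' ih =>
    intro hj a
    have hjl : j ≠ l := fun h => hj (h ▸ List.mem_cons_self)
    have hjL' : j ∉ L' := fun h => hj (List.mem_cons_of_mem l h)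
    rw [List.map_cons, List.prod_cons, mul_apply_eq_comp, mul_apply_eq_comp,
      lem_commE S hS j l hjl, ih hjL']

lemma lem_EL_coord : ∀ L : List (Fin n), ∀ (a : lp (fun _ : Fin n → ℕ => ℂ) 2)
    (k : Fin n → ℕ),
    ((L.map (fun l => 1 - S l * ContinuousLinearMap.adjoint (S l))).prod a) k
      = if ∀ j ∈ L, k j = 0 then a k else 0 := by
  intro L
  induction L with
  | nil => intro a k; simp
  | cons j L' ih =>
    intro a k
    rw [List.map_cons, List.prod_cons, mul_apply_eq_comp, lem_E S hS j, ih a k]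
    by_cases h0 : k j = 0
    · by_cases hall : ∀ l ∈ L', k l = 0
      · rw [if_pos h0, if_pos hall, if_pos (by simpa [h0] using hall)]
      · rw [if_pos h0, if_neg hall, if_neg (by simp [hall])]
    · rw [if_neg h0, if_neg (by simp [h0])]

lemma lem_Pc (Pc : lp (fun _ : Fin n → ℕ => ℂ) 2 →L[ℂ] lp (fun _ : Fin n → ℕ => ℂ) 2)
    (hPc : ∀ (a : lp (fun _ : Fin n → ℕ => ℂ) 2) (k : Fin n → ℕ),
      (Pc a) k = if k = 0 then a 0 else 0)
    (a : lp (fun _ : Fin n → ℕ => ℂ) 2) :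
    ((List.finRange n).map (fun l => 1 - S l * ContinuousLinearMap.adjoint (S l))).prod a
      = Pc a := by
  apply lp.ext
  funext k
  rw [lem_EL_coord S hS (List.finRange n) a k, hPc]
  by_cases hk : k = 0
  · rw [if_pos hk, if_pos (by intro j _; rw [hk]; rfl), hk]
  · rw [if_neg hk, if_neg ?_]
    intro hall
    apply hk
    funext l
    exact hall l (List.mem_finRange l)

omit hS

lemma lem_Pc_single (Pc : lp (fun _ : Fin n → ℕ => ℂ) 2 →L[ℂ] lp (fun _ : Fin n → ℕ => ℂ) 2)
    (hPc : ∀ (a : lp (fun _ : Fin n → ℕ => ℂ) 2) (k : Fin n → ℕ),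
      (Pc a) k = if k = 0 then a 0 else 0)
    (a : lp (fun _ : Fin n → ℕ => ℂ) 2) :
    Pc a = (a 0) • lp.single 2 (0 : Fin n → ℕ) (1:ℂ) := by
  apply lp.ext
  funext k
  rw [hPc, lp.coeFn_smul, Pi.smul_apply]
  rcases eq_or_ne k 0 with rfl | hk
  · rw [if_pos rfl, lp.single_apply_self, smul_eq_mul, mul_one]
  · rw [if_neg hk, lp.single_apply_ne _ _ _ hk, smul_eq_mul, mul_zero]

include hQinv in
lemma lem_perp (i : Fin n) (v : lp (fun _ : Fin n → ℕ => ℂ) 2) (hv : v ∈ Qᗮ) : S i v ∈ Qᗮ := by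
  rw [Submodule.mem_orthogonal]
  intro u hu
  rw [← adjoint_inner_left]
  exact (Submodule.mem_orthogonal Q v).1 hv _ (hQinv i u hu)

include hQinv hC in
lemma lem_starC (j : Fin n) (x : Q) :
    ((star (C j) x : Q) : lp (fun _ : Fin n → ℕ => ℂ) 2)
      = ContinuousLinearMap.adjoint (S j) ↑x := by
  rw [star_eq_adjoint, hC j]
  rw [adjoint_comp, adjoint_comp, Submodule.adjoint_orthogonalProjection,
    Submodule.adjoint_subtypeL]
  show ((Q.orthogonalProjectionOnto (ContinuousLinearMap.adjoint (S j) (↑x)) : Q) :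
    lp (fun _ : Fin n → ℕ => ℂ) 2) = _
  exact Submodule.starProjection_eq_self_iff.2 (hQinv j _ x.2)

include hS hQinv hC hdc in
lemma lem_dc (i j : Fin n) (hij : i ≠ j) (u : lp (fun _ : Fin n → ℕ => ℂ) 2) (hu : u ∈ Q) :
    ContinuousLinearMap.adjoint (S j)
      (S i u - ↑(Q.orthogonalProjectionOnto (S i u))) ∈ Qᗮ := by
  have h0 : C i (star (C j) ⟨u, hu⟩) = star (C j) (C i ⟨u, hu⟩) := by
    have h := hdc i j hij
    calc C i (star (C j) ⟨u, hu⟩) = (C i * star (C j)) ⟨u, hu⟩ := rfl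
    _ = (star (C j) * C i) ⟨u, hu⟩ := by rw [h]
    _ = star (C j) (C i ⟨u, hu⟩) := rfl
  have h1 : ((C i (star (C j) ⟨u, hu⟩) : Q) : lp (fun _ : Fin n → ℕ => ℂ) 2)
      = ↑(Q.orthogonalProjectionOnto (ContinuousLinearMap.adjoint (S j) (S i u))) := by
    rw [hC i]
    show ((Q.orthogonalProjectionOnto (S i ↑(star (C j) (⟨u, hu⟩ : Q))) : Q) :
      lp (fun _ : Fin n → ℕ => ℂ) 2) = _
    rw [lem_starC S Q hQinv C hC]
    show _ = ((Q.orthogonalProjectionOnto (ContinuousLinearMap.adjoint (S j) (S i u)) : Q) :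
      lp (fun _ : Fin n → ℕ => ℂ) 2)
    rw [lem_comm S hS j i (Ne.symm hij)]
  have h2 : ((star (C j) (C i ⟨u, hu⟩) : Q) : lp (fun _ : Fin n → ℕ => ℂ) 2)
      = ContinuousLinearMap.adjoint (S j) ↑(Q.orthogonalProjectionOnto (S i u)) := by
    rw [lem_starC S Q hQinv C hC, hC i]
    rfl
  have heq : (↑(Q.orthogonalProjectionOnto (ContinuousLinearMap.adjoint (S j) (S i u)))
      : lp (fun _ : Fin n → ℕ => ℂ) 2)
      = ContinuousLinearMap.adjoint (S j) ↑(Q.orthogonalProjectionOnto (S i u)) := by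
    rw [← h1, ← h2, h0]
  rw [map_sub, ← heq]
  exact Submodule.sub_starProjection_mem_orthogonal _

set_option maxHeartbeats 1000000 in
include hS hQinv hC hdc in
lemma lem_alpha :
    ∀ L : List (Fin n), L.Nodup → ∀ i, i ∉ L → ∀ u, u ∈ Q →
    ContinuousLinearMap.adjoint (S i)
      (((L.map (fun l => 1 - S l * ContinuousLinearMap.adjoint (S l))).prod u)
        - ↑(Q.orthogonalProjectionOnto
            ((L.map (fun l => 1 - S l * ContinuousLinearMap.adjoint (S l))).prod u))) ∈ Qᗮ := by
  intro L
  induction L with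
  | nil =>
    intro _ i _ u hu
    have : ((Q.orthogonalProjectionOnto u : Q) : lp (fun _ : Fin n → ℕ => ℂ) 2) = u :=
      Submodule.starProjection_eq_self_iff.2 hu
    simp [this]
  | cons j L' ih =>
    intro hnd i hi u hu
    rw [List.nodup_cons] at hnd
    have hij : i ≠ j := fun h => hi (h ▸ List.mem_cons_self)
    have hiL' : i ∉ L' := fun h => hi (List.mem_cons_of_mem j h)
    set EL' := (L'.map (fun l => 1 - S l * ContinuousLinearMap.adjoint (S l))).prod with hEL'
    set w := EL' u with hw
    have v_mem : ContinuousLinearMap.adjoint (S j) u ∈ Q := hQinv j u hu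
    set v := ContinuousLinearMap.adjoint (S j) u with hv
    set q : lp (fun _ : Fin n → ℕ => ℂ) 2 := ↑(Q.orthogonalProjectionOnto (EL' v)) with hq
    have hq_mem : q ∈ Q := (Q.orthogonalProjectionOnto (EL' v)).2
    set r : lp (fun _ : Fin n → ℕ => ℂ) 2 := EL' v - q with hr
    have hr_perp : r ∈ Qᗮ := Submodule.sub_starProjection_mem_orthogonal _
    have hcons : ((j :: L').map (fun l => 1 - S l * ContinuousLinearMap.adjoint (S l))).prod u
        = (1 - S j * ContinuousLinearMap.adjoint (S j)) w := by
      rw [List.map_cons, List.prod_cons, mul_apply_eq_comp]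
    have hSjw : ContinuousLinearMap.adjoint (S j) w = EL' v := by
      rw [hw, hEL', lem_commEL S hS j L' hnd.1 u]
    have hsplit : (1 - S j * ContinuousLinearMap.adjoint (S j)) w
        = w - S j q - S j r := by
      rw [ContinuousLinearMap.sub_apply, one_apply_eq_self, mul_apply_eq_comp, hSjw]
      have : EL' v = q + r := by rw [hr]; abel
      rw [this, map_add]
      abel
    have hPr : (Q.orthogonalProjectionOnto (S j r)) = 0 :=
      Submodule.orthogonalProjectionOnto_apply_of_mem_orthogonal
        (lem_perp S Q hQinv j r hr_perp)
    clear_value w v q r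
    have hkey : (1 - S j * ContinuousLinearMap.adjoint (S j)) w
          - ↑(Q.orthogonalProjectionOnto ((1 - S j * ContinuousLinearMap.adjoint (S j)) w))
        = (w - ↑(Q.orthogonalProjectionOnto w)) - (S j q - ↑(Q.orthogonalProjectionOnto (S j q)))
          - S j r := by
      rw [hsplit, map_sub, map_sub, hPr, Submodule.coe_sub, Submodule.coe_sub,
        Submodule.coe_zero, sub_zero]
      abel
    rw [hcons, hkey, map_sub, map_sub]
    refine sub_mem (sub_mem ?_ ?_) ?_
    · rw [hw]; exact ih hnd.2 i hiL' u hu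
    · exact lem_dc S hS Q hQinv C hC hdc j i (Ne.symm hij) q hq_mem
    · rw [lem_comm S hS i j hij]
      refine lem_perp S Q hQinv j _ ?_
      have := ih hnd.2 i hiL' v v_mem
      rw [hr, hq]
      simpa using this

set_option maxHeartbeats 1000000 in
set_option synthInstance.maxHeartbeats 400000 in
include hS hQinv hC hdc in
lemma lem_B :
    ∀ L : List (Fin n), L.Nodup → ∀ x : Q,
    ((((L.map (fun l => 1 - C l * star (C l))).prod) x : Q) : lp (fun _ : Fin n → ℕ => ℂ) 2)
      = ↑(Q.orthogonalProjectionOnto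
          ((L.map (fun l => 1 - S l * ContinuousLinearMap.adjoint (S l))).prod ↑x)) := by
  intro L
  induction L with
  | nil =>
    intro _ x
    rw [List.map_nil, List.prod_nil, List.map_nil, List.prod_nil, one_apply_eq_self, one_apply_eq_self,
      Submodule.orthogonalProjectionOnto_mem_subspace_eq_self]
  | cons j L' ih =>
    intro hnd x
    rw [List.nodup_cons] at hnd
    set ELS := (L'.map (fun l => 1 - S l * ContinuousLinearMap.adjoint (S l))).prod with hELS
    set w : lp (fun _ : Fin n → ℕ => ℂ) 2 := ELS ↑x with hw
    set y : Q := ((L'.map (fun l => 1 - C l * star (C l))).prod) x with hy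
    have hyw : (y : lp (fun _ : Fin n → ℕ => ℂ) 2) = ↑(Q.orthogonalProjectionOnto w) :=
      ih hnd.2 x
    have hL : ((((j :: L').map (fun l => 1 - C l * star (C l))).prod x : Q) :
        lp (fun _ : Fin n → ℕ => ℂ) 2)
        = ↑y - ↑(Q.orthogonalProjectionOnto (S j (ContinuousLinearMap.adjoint (S j)
            ↑(Q.orthogonalProjectionOnto w)))) := by
      rw [List.map_cons, List.prod_cons, mul_apply_eq_comp, ← hy]
      rw [ContinuousLinearMap.sub_apply, one_apply_eq_self, mul_apply_eq_comp]
      rw [Submodule.coe_sub]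
      congr 1
      have hCapp : ∀ z : Q, ((C j z : Q) : lp (fun _ : Fin n → ℕ => ℂ) 2)
          = ↑(Q.orthogonalProjectionOnto (S j ↑z)) := by
        intro z; rw [hC j]; rfl
      rw [hCapp, lem_starC S Q hQinv C hC j y, hyw]
    have hcons : ((j :: L').map (fun l => 1 - S l * ContinuousLinearMap.adjoint (S l))).prod ↑x
        = (1 - S j * ContinuousLinearMap.adjoint (S j)) w := by
      rw [List.map_cons, List.prod_cons, mul_apply_eq_comp]
    set r : lp (fun _ : Fin n → ℕ => ℂ) 2 := w - ↑(Q.orthogonalProjectionOnto w) with hr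
    have hr_perp : r ∈ Qᗮ := Submodule.sub_starProjection_mem_orthogonal _
    have hra : ContinuousLinearMap.adjoint (S j) r ∈ Qᗮ := by
      rw [hr, hw, hELS]
      exact lem_alpha S hS Q hQinv C hC hdc L' hnd.2 j hnd.1 ↑x x.2
    have hEr : (1 - S j * ContinuousLinearMap.adjoint (S j)) r ∈ Qᗮ := by
      rw [ContinuousLinearMap.sub_apply, one_apply_eq_self, mul_apply_eq_comp]
      exact sub_mem hr_perp (lem_perp S Q hQinv j _ hra)
    have hsplitw : w = ↑(Q.orthogonalProjectionOnto w) + r := by rw [hr]; abel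
    have hR : (Q.orthogonalProjectionOnto
        (((j :: L').map (fun l => 1 - S l * ContinuousLinearMap.adjoint (S l))).prod ↑x) : Q)
        = Q.orthogonalProjectionOnto ((1 - S j * ContinuousLinearMap.adjoint (S j))
            (↑(Q.orthogonalProjectionOnto w) : lp (fun _ : Fin n → ℕ => ℂ) 2)) := by
      rw [hcons]
      conv_lhs => rw [hsplitw]
      rw [map_add, map_add,
        Submodule.orthogonalProjectionOnto_apply_of_mem_orthogonal hEr, add_zero]
    rw [hL, hR]
    rw [ContinuousLinearMap.sub_apply, one_apply_eq_self, mul_apply_eq_comp, map_sub, Submodule.coe_sub]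
    congr 1
    rw [Submodule.orthogonalProjectionOnto_mem_subspace_eq_self (Q.orthogonalProjectionOnto w), hyw]

end Stmt17Aux

open ContinuousLinearMap
open scoped InnerProductSpace

set_option maxHeartbeats 2000000 in
set_option synthInstance.maxHeartbeats 400000 in
/-- Let `Q` be a proper closed `(S₁*, …, Sₙ*)`-invariant subspace of `H²(𝔻ⁿ) ≅ ℓ²(ℕⁿ, ℂ)`
and `Cᵢ = P_Q Sᵢ|_Q`.  If `(C₁, …, Cₙ)` is doubly commuting, then the defect operator
`D_{C*} = ∏ᵢ (I - CᵢCᵢ*)^{1/2}` has rank at most one; indeed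
`D_{C*}² = P_Q P_ℂ|_Q`, where `P_ℂ` is the projection onto the constants. -/
theorem stmt_17 (n : ℕ)
    (S : Fin n → (lp (fun _ : Fin n → ℕ => ℂ) 2 →L[ℂ] lp (fun _ : Fin n → ℕ => ℂ) 2))
    (hS : ∀ i (a : lp (fun _ : Fin n → ℕ => ℂ) 2) (k : Fin n → ℕ),
      (S i a) k = if k i = 0 then 0 else a (k - Pi.single i 1))
    (Pc : lp (fun _ : Fin n → ℕ => ℂ) 2 →L[ℂ] lp (fun _ : Fin n → ℕ => ℂ) 2)
    (hPc : ∀ (a : lp (fun _ : Fin n → ℕ => ℂ) 2) (k : Fin n → ℕ),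
      (Pc a) k = if k = 0 then a 0 else 0)
    (Q : Submodule ℂ (lp (fun _ : Fin n → ℕ => ℂ) 2)) [CompleteSpace Q]
    (hQproper : Q ≠ ⊤)
    (hQinv : ∀ i, ∀ x ∈ Q, ContinuousLinearMap.adjoint (S i) x ∈ Q)
    (C : Fin n → (Q →L[ℂ] Q))
    (hC : ∀ i, C i = (Q.orthogonalProjectionOnto).comp ((S i).comp (Q.subtypeL)))
    (hdc : ∀ i j, i ≠ j → C i * star (C j) = star (C j) * C i)
    (Dc : Q →L[ℂ] Q) (hDcpos : Dc.IsPositive)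
    (hDcsq : Dc ^ 2 = (List.ofFn fun i => 1 - C i * star (C i)).prod) :
    Dc ^ 2 = (Q.orthogonalProjectionOnto).comp (Pc.comp (Q.subtypeL)) ∧
    Module.rank ℂ (LinearMap.range ((Dc : Q →L[ℂ] Q) : Q →ₗ[ℂ] Q)) ≤ 1 := by
  have part1 : Dc ^ 2 = (Q.orthogonalProjectionOnto).comp (Pc.comp (Q.subtypeL)) := by
    refine ContinuousLinearMap.ext fun x => Subtype.coe_injective ?_
    beta_reduce
    rw [hDcsq, List.ofFn_eq_map]
    rw [Stmt17Aux.lem_B S hS Q hQinv C hC hdc (List.finRange n) (List.nodup_finRange n) x]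
    rw [Stmt17Aux.lem_Pc S hS Pc hPc ↑x]
    rfl
  refine ⟨part1, ?_⟩
  set v0 : Q := Q.orthogonalProjectionOnto (lp.single 2 (0 : Fin n → ℕ) (1:ℂ)) with hv0
  have hDc2 : ∀ z : Q, (Dc ^ 2) z = ((z : lp (fun _ : Fin n → ℕ => ℂ) 2) 0 : ℂ) • v0 := by
    intro z
    rw [part1]
    show Q.orthogonalProjectionOnto (Pc ↑z) = _
    rw [Stmt17Aux.lem_Pc_single Pc hPc ↑z, map_smul, hv0]
  have hpow : ∀ a : Q, (Dc ^ 2) a = Dc (Dc a) := fun a => by rw [pow_two, mul_apply_eq_comp]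
  have hsa : ∀ a b : Q, ⟪Dc a, b⟫_ℂ = ⟪a, Dc b⟫_ℂ := by
    intro a b
    have h := hDcpos.isSelfAdjoint
    rw [ContinuousLinearMap.isSelfAdjoint_iff'] at h
    conv_lhs => rw [← h]
    exact adjoint_inner_left Dc b a
  set V : Submodule ℂ Q := Submodule.span ℂ {v0} with hV
  have hmemV : ∀ z : Q, (Dc ^ 2) z ∈ V := fun z => by
    rw [hDc2]; exact Submodule.smul_mem _ _ (Submodule.mem_span_singleton_self v0)
  have hker : ∀ y : Q, y ∈ Vᗮ → Dc y = 0 := by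
    intro y hy
    have h2 : (Dc ^ 2) y = 0 := by
      have hz : ⟪(Dc ^ 2) y, (Dc ^ 2) y⟫_ℂ = 0 := by
        have e1 : ⟪(Dc ^ 2) y, (Dc ^ 2) y⟫_ℂ = ⟪y, (Dc ^ 2) ((Dc ^ 2) y)⟫_ℂ := by
          rw [hpow ((Dc ^ 2) y), hpow y, hsa (Dc y), hsa y]
        rw [e1]
        exact (Submodule.mem_orthogonal' V y).1 hy _ (hmemV _)
      exact inner_self_eq_zero.1 hz
    have hz : ⟪Dc y, Dc y⟫_ℂ = 0 := by
      rw [hsa y (Dc y), ← hpow y, h2, inner_zero_right]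
    exact inner_self_eq_zero.1 hz
  have hrange : LinearMap.range ((Dc : Q →L[ℂ] Q) : Q →ₗ[ℂ] Q) ≤ Vᗮᗮ := by
    rintro b ⟨a, rfl⟩
    rw [Submodule.mem_orthogonal]
    intro z hz
    show ⟪z, Dc a⟫_ℂ = 0
    rw [← hsa z a, hker z hz, inner_zero_left]
  haveI : FiniteDimensional ℂ V := by
    apply FiniteDimensional.span_of_finite
    exact Set.finite_singleton _
  haveI : CompleteSpace V := FiniteDimensional.complete ℂ V
  have horth : Vᗮᗮ = V := Submodule.orthogonal_orthogonal V
  rw [horth] at hrange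
  calc Module.rank ℂ (LinearMap.range ((Dc : Q →L[ℂ] Q) : Q →ₗ[ℂ] Q))
      ≤ Module.rank ℂ V := Submodule.rank_mono hrange
    _ ≤ 1 := by
        rw [hV]
        simpa using rank_span_le (R := ℂ) ({v0} : Set Q)
end
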